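/- arXiv:0906.1761 — 6 statements merged into one kernel-verified Lean document; each statement's English description precedes it below -/
import Mathlib

section
/- Let e_1,…,e_p be unit vectors in ℂᵐ and f_1,…,f_p be unit vectors in ℂⁿ, with f_1,…,f_p linearly independent. If e ∈ ℂᵐ and f ∈ ℂⁿ are unit vectors such that the product vector e⊗f lies in the linear span of {e_i⊗f_i : 1 ≤ i ≤ p}, then there is an index j such that ℂe = ℂe_j and such that f lies in the linear span of {f_i : ℂe_i = ℂe_j}. -/
open scoped Kronecker ComplexOrder

noncomputable section

lemma esum_apply {ι κ : Type*} [Fintype ι] (g : ι → EuclideanSpace ℂ κ) (a : κ) :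
    (∑ i, g i) a = ∑ i, g i a := by
  rw [WithLp.ofLp_sum, Finset.sum_apply]

/-- The (Kronecker) tensor product of two vectors. -/
def tensorVec {m n : ℕ} (x : EuclideanSpace ℂ (Fin m)) (y : EuclideanSpace ℂ (Fin n)) :
    EuclideanSpace ℂ (Fin m × Fin n) :=
  WithLp.toLp 2 (fun p : Fin m × Fin n => x p.1 * y p.2)

/-- If `e⊗f` lies in the span of `{eᵢ⊗fᵢ}` with the `fᵢ` linearly independent, then
`ℂe = ℂeⱼ` for some `j`, and `f` lies in the span of those `fᵢ` with `ℂeᵢ = ℂeⱼ`. -/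
theorem product_vector_in_span {m n p : ℕ}
    (e : Fin p → EuclideanSpace ℂ (Fin m)) (f : Fin p → EuclideanSpace ℂ (Fin n))
    (he : ∀ i, ‖e i‖ = 1) (hf1 : ∀ i, ‖f i‖ = 1) (hf : LinearIndependent ℂ f)
    (x : EuclideanSpace ℂ (Fin m)) (y : EuclideanSpace ℂ (Fin n))
    (hx : ‖x‖ = 1) (hy : ‖y‖ = 1)
    (hmem : tensorVec x y ∈
      Submodule.span ℂ (Set.range fun i => tensorVec (e i) (f i))) :
    ∃ j : Fin p, Submodule.span ℂ {x} = Submodule.span ℂ {e j} ∧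
      y ∈ Submodule.span ℂ
        (f '' {i | Submodule.span ℂ {e i} = Submodule.span ℂ {e j}}) := by
  obtain ⟨c, hc⟩ := (Submodule.mem_span_range_iff_exists_fun ℂ).mp hmem
  have key : ∀ a b, x a * y b = ∑ i, c i * (e i a * f i b) := by
    intro a b
    have h := congrFun (congrArg WithLp.ofLp hc) (a, b)
    rw [esum_apply] at h
    simp only [PiLp.smul_apply, smul_eq_mul, tensorVec, PiLp.toLp_apply] at h
    exact h.symm
  have hx0 : x ≠ 0 := by intro h; rw [h] at hx; simp at hx
  obtain ⟨a0, ha0⟩ : ∃ a, x a ≠ 0 := by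
    by_contra h; push_neg at h; exact hx0 (PiLp.ext h)
  set d : Fin p → ℂ := fun i => c i * e i a0 / x a0 with hd
  have hyd : ∀ b, y b = ∑ i, d i * f i b := by
    intro b
    have h1 := key a0 b
    have : x a0 * y b = x a0 * ∑ i, d i * f i b := by
      rw [h1, Finset.mul_sum]
      refine Finset.sum_congr rfl fun i _ => ?_
      simp only [hd]
      rw [div_mul_eq_mul_div, ← mul_div_assoc, mul_div_cancel_left₀ _ ha0]; ring
    exact mul_left_cancel₀ ha0 this
  have hmain : ∀ a i, x a * d i = c i * e i a := by
    intro a i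
    have hsum : ∑ i, (x a * d i - c i * e i a) • f i = 0 := by
      ext b
      have h2 := key a b
      show (∑ i, (x a * d i - c i * e i a) • f i) b = (0 : EuclideanSpace ℂ (Fin n)) b
      rw [esum_apply]
      simp only [PiLp.smul_apply, smul_eq_mul, PiLp.zero_apply]
      rw [Finset.sum_congr rfl (fun i _ => by ring :
        ∀ i ∈ Finset.univ, (x a * d i - c i * e i a) * f i b
          = x a * (d i * f i b) - c i * (e i a * f i b))]
      rw [Finset.sum_sub_distrib, ← Finset.mul_sum, ← hyd b, h2]
      simp
    exact sub_eq_zero.mp (Fintype.linearIndependent_iff.mp hf _ hsum i)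
  have hy0 : y ≠ 0 := by intro h; rw [h] at hy; simp at hy
  obtain ⟨b0, hb0⟩ : ∃ b, y b ≠ 0 := by
    by_contra h; push_neg at h; exact hy0 (PiLp.ext h)
  obtain ⟨j, hj⟩ : ∃ j, d j ≠ 0 := by
    by_contra h; push_neg at h
    apply hb0; rw [hyd b0]
    exact Finset.sum_eq_zero fun i _ => by rw [h i]; ring
  -- for any i with d i ≠ 0, span {e i} = span {x}
  have spanEq : ∀ i, d i ≠ 0 → Submodule.span ℂ {e i} = Submodule.span ℂ {x} := by
    intro i hi
    have hci : c i ≠ 0 := by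
      intro h0
      have := hmain a0 i
      rw [h0, zero_mul] at this
      exact mul_ne_zero ha0 hi this
    have hei : e i = (d i / c i) • x := by
      ext a
      have := hmain a i
      simp only [PiLp.smul_apply, smul_eq_mul]
      field_simp
      linear_combination -this
    rw [hei]
    exact Submodule.span_singleton_smul_eq ((div_ne_zero hi hci).isUnit) x
  refine ⟨j, (spanEq j hj).symm, ?_⟩
  have hyd' : y = ∑ i, d i • f i := by
    ext b
    rw [esum_apply]
    simpa using hyd b
  rw [hyd']
  refine Submodule.sum_mem _ fun i _ => ?_
  by_cases hi : d i = 0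
  · simp [hi]
  · refine Submodule.smul_mem _ _ (Submodule.subset_span ?_)
    exact ⟨i, by simp [Set.mem_setOf_eq, spanEq i hi, spanEq j hj], rfl⟩
end
end

section
/- Let e_1,…,e_p be unit vectors in ℂᵐ and f_1,…,f_p be unit vectors in ℂⁿ, with f_1,…,f_p linearly independent and the lines ℂe_1,…,ℂe_p pairwise distinct. Then: (a) if e ∈ ℂᵐ and f ∈ ℂⁿ are unit vectors with e⊗f in the linear span of {e_i⊗f_i : 1 ≤ i ≤ p}, there is an index j with ℂe = ℂe_j and ℂf = ℂf_j; and (b) the vectors e_1⊗f_1,…,e_p⊗f_p are linearly independent. -/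
open scoped Kronecker ComplexOrder

noncomputable section

lemma tv_exists_coord {k : ℕ} {v : EuclideanSpace ℂ (Fin k)} (hv : v ≠ 0) :
    ∃ a, v a ≠ 0 := by
  by_contra h
  push_neg at h
  exact hv (PiLp.ext fun a => by simp [h a])

lemma tv_sum_apply {m n p : ℕ} (e : Fin p → EuclideanSpace ℂ (Fin m))
    (f : Fin p → EuclideanSpace ℂ (Fin n)) (c : Fin p → ℂ) (a : Fin m) (b : Fin n) :
    (∑ i, c i • tensorVec (e i) (f i)) (a, b) = ∑ i, c i * (e i a * f i b) := by
  simp [WithLp.ofLp_sum, Finset.sum_apply, tensorVec]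

lemma tv_vsum_apply {n p : ℕ} (f : Fin p → EuclideanSpace ℂ (Fin n)) (g : Fin p → ℂ)
    (b : Fin n) : (∑ i, g i • f i) b = ∑ i, g i * f i b := by
  simp [WithLp.ofLp_sum, Finset.sum_apply]

/-- If the `fᵢ` are linearly independent and the lines `ℂeᵢ` are pairwise distinct, then
(a) any product unit vector `e⊗f` in the span of the `eᵢ⊗fᵢ` has `ℂe = ℂeⱼ`, `ℂf = ℂfⱼ`
for some `j`, and (b) the vectors `eᵢ⊗fᵢ` are linearly independent. -/
theorem product_vector_in_span_distinct_lines {m n p : ℕ}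
    (e : Fin p → EuclideanSpace ℂ (Fin m)) (f : Fin p → EuclideanSpace ℂ (Fin n))
    (he : ∀ i, ‖e i‖ = 1) (hf1 : ∀ i, ‖f i‖ = 1) (hf : LinearIndependent ℂ f)
    (hdist : ∀ i j : Fin p, i ≠ j →
      Submodule.span ℂ {e i} ≠ Submodule.span ℂ {e j}) :
    (∀ (x : EuclideanSpace ℂ (Fin m)) (y : EuclideanSpace ℂ (Fin n)),
      ‖x‖ = 1 → ‖y‖ = 1 →
      tensorVec x y ∈ Submodule.span ℂ (Set.range fun i => tensorVec (e i) (f i)) →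
      ∃ j : Fin p, Submodule.span ℂ {x} = Submodule.span ℂ {e j} ∧
        Submodule.span ℂ {y} = Submodule.span ℂ {f j}) ∧
    LinearIndependent ℂ (fun i => tensorVec (e i) (f i)) := by
  have hfli := Fintype.linearIndependent_iff.mp hf
  have hene : ∀ i, e i ≠ 0 := fun i h => by
    have := he i; rw [h] at this; simp at this
  constructor
  · intro x y hx hy hmem
    have hx0 : x ≠ 0 := fun h => by rw [h] at hx; simp at hx
    have hy0 : y ≠ 0 := fun h => by rw [h] at hy; simp at hy
    obtain ⟨c, hc⟩ := (Submodule.mem_span_range_iff_exists_fun ℂ).mp hmem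
    have key : ∀ a b, ∑ i, c i * (e i a * f i b) = x a * y b := by
      intro a b
      have := congrArg (fun v => v (a, b)) hc
      rw [tv_sum_apply] at this
      exact this
    obtain ⟨a₀, ha₀⟩ := tv_exists_coord hx0
    set d : Fin p → ℂ := fun i => c i * e i a₀ / x a₀ with hd
    have hrel : ∀ (a : Fin m) (i : Fin p), c i * e i a = x a * d i := by
      intro a i
      have hsum : (∑ i, (x a₀ * (c i * e i a) - x a * (c i * e i a₀)) • f i) = 0 := by
        refine PiLp.ext fun b => ?_
        rw [tv_vsum_apply]
        have h1 := key a b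
        have h2 := key a₀ b
        have hexp : ∑ i, (x a₀ * (c i * e i a) - x a * (c i * e i a₀)) * f i b
            = x a₀ * ∑ i, c i * (e i a * f i b) - x a * ∑ i, c i * (e i a₀ * f i b) := by
          rw [Finset.mul_sum, Finset.mul_sum, ← Finset.sum_sub_distrib]
          congr 1; funext i; ring
        rw [hexp, h1, h2]
        show _ = (0 : EuclideanSpace ℂ (Fin n)) b
        simp
        ring
      have hz := sub_eq_zero.mp (hfli _ hsum i)
      simp only [hd]
      field_simp
      linear_combination hz
    have hyd : ∀ b, y b = ∑ i, d i * f i b := by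
      intro b
      have h2 := key a₀ b
      have : ∑ i, d i * f i b = (∑ i, c i * (e i a₀ * f i b)) / x a₀ := by
        rw [Finset.sum_div]
        congr 1; funext i
        simp only [hd]
        field_simp
      rw [this, h2]
      field_simp
    have hdex : ∃ j, d j ≠ 0 := by
      by_contra h
      push_neg at h
      apply hy0
      refine PiLp.ext fun b => ?_
      rw [hyd b]
      show _ = (0 : EuclideanSpace ℂ (Fin n)) b
      simp [h]
    obtain ⟨j, hj⟩ := hdex
    -- for any i with d i ≠ 0, span x = span (e i)
    have hspan : ∀ i, d i ≠ 0 → Submodule.span ℂ {x} = Submodule.span ℂ {e i} := by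
      intro i hdi
      have hci : c i ≠ 0 := by
        intro h
        obtain ⟨a, ha⟩ := tv_exists_coord hx0
        have := hrel a i
        rw [h] at this
        simp at this
        rcases this with h1 | h1
        · exact ha h1
        · exact hdi h1
      have hx_eq : x = (c i / d i) • e i := by
        refine PiLp.ext fun a => ?_
        have := hrel a i
        show x a = ((c i / d i) • e i) a
        simp only [PiLp.smul_apply, smul_eq_mul]
        rw [div_mul_eq_mul_div, eq_div_iff hdi]
        linear_combination -this
      rw [hx_eq]
      exact Submodule.span_singleton_smul_eq (IsUnit.mk0 _ (div_ne_zero hci hdi)) _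
    refine ⟨j, hspan j hj, ?_⟩
    -- d i = 0 for i ≠ j
    have hdz : ∀ i, i ≠ j → d i = 0 := by
      intro i hij
      by_contra hdi
      exact hdist i j hij ((hspan i hdi).symm.trans (hspan j hj))
    have hy_eq : y = d j • f j := by
      refine PiLp.ext fun b => ?_
      rw [hyd b]
      show _ = (d j • f j) b
      simp only [PiLp.smul_apply, smul_eq_mul]
      rw [Finset.sum_eq_single j]
      · intro i _ hij; rw [hdz i hij]; ring
      · intro h; exact absurd (Finset.mem_univ j) h
    rw [hy_eq]
    exact Submodule.span_singleton_smul_eq (IsUnit.mk0 _ hj) _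
  · rw [Fintype.linearIndependent_iff]
    intro c hc i
    have key : ∀ a b, ∑ i, c i * (e i a * f i b) = 0 := by
      intro a b
      have := congrArg (fun v => v (a, b)) hc
      rw [tv_sum_apply] at this
      simpa using this
    obtain ⟨a, ha⟩ := tv_exists_coord (hene i)
    have hsum : (∑ i, (c i * e i a) • f i) = 0 := by
      refine PiLp.ext fun b => ?_
      rw [tv_vsum_apply]
      have := key a b
      show _ = (0 : EuclideanSpace ℂ (Fin n)) b
      simp only [PiLp.zero_apply]
      rw [← this]
      congr 1; funext i; ring
    have := hfli _ hsum i
    rcases mul_eq_zero.mp this with h | h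
    · exact h
    · exact absurd h ha

end
end

section
/- Let L be a subspace of ℂⁿ which is the internal direct sum of subspaces L_1,…,L_p, and for each i let F_i be the face of the state space K_n of B(ℂⁿ) corresponding to L_i, i.e. F_i = {ρ ∈ K_n : tr(ρ P_i) = 1} where P_i is the orthogonal projection onto L_i. Then the convex hull of F_1 ∪ … ∪ F_p is the direct convex sum of F_1,…,F_p. -/
open scoped Kronecker ComplexOrder

noncomputable section

/-- The state space of `B(ℂ^ι)`: density matrices. -/
def stateSet (ι : Type*) [Fintype ι] [DecidableEq ι] : Set (Matrix ι ι ℂ) :=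
  {ρ | ρ.PosSemidef ∧ ρ.trace = 1}

/-- `C` is the direct convex sum of the convex sets `F 1, …, F q`. -/
def IsDirectConvexSum {E : Type*} [AddCommGroup E] [Module ℝ E] {q : ℕ}
    (C : Set E) (F : Fin q → Set E) : Prop :=
  (∀ x ∈ C, ∃ (lam : Fin q → ℝ) (pt : Fin q → E),
      (∀ i, 0 ≤ lam i) ∧ (∑ i, lam i) = 1 ∧ (∀ i, lam i ≠ 0 → pt i ∈ F i) ∧
      x = ∑ i, lam i • pt i) ∧
  (∀ (lam lam' : Fin q → ℝ) (pt pt' : Fin q → E),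
      (∀ i, 0 ≤ lam i) → (∑ i, lam i) = 1 → (∀ i, lam i ≠ 0 → pt i ∈ F i) →
      (∀ i, 0 ≤ lam' i) → (∑ i, lam' i) = 1 → (∀ i, lam' i ≠ 0 → pt' i ∈ F i) →
      (∑ i, lam i • pt i) = (∑ i, lam' i • pt' i) →
      ∀ i, lam i = lam' i ∧ (lam i ≠ 0 → pt i = pt' i))

namespace DirectConvexSumAux

open Matrix

lemma aux_trace_zero {m k : Type*} [Fintype m] [Fintype k]
    {A : Matrix m k ℂ} (h : (Aᴴ * A).trace = 0) : A = 0 := by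
  have hnn : ∀ j ∈ Finset.univ, (0:ℂ) ≤ (Aᴴ * A) j j := by
    intro j _
    simp only [Matrix.mul_apply, Matrix.conjTranspose_apply]
    exact Finset.sum_nonneg fun i _ => star_mul_self_nonneg _
  have hdiag : ∀ j, (Aᴴ * A) j j = 0 := fun j =>
    (Finset.sum_eq_zero_iff_of_nonneg hnn).mp h j (Finset.mem_univ j)
  ext i j
  have h2 : dotProduct (star (fun i => A i j)) (fun i => A i j) = 0 := by
    simpa [Matrix.mul_apply, Matrix.conjTranspose_apply, dotProduct] using hdiag j
  have := dotProduct_star_self_eq_zero.mp h2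
  simpa using congrFun this i

lemma aux_face {N : ℕ} {P ρ : Matrix (Fin N) (Fin N) ℂ} (hP1 : P.IsHermitian) (hP2 : P * P = P)
    (hρ : ρ.PosSemidef) (htr : ρ.trace = 1) (htrP : (ρ * P).trace = 1) :
    ρ * P = ρ ∧ P * ρ = ρ := by
  set Q : Matrix (Fin N) (Fin N) ℂ := 1 - P with hQ
  have hQh : Qᴴ = Q := by simp [hQ, conjTranspose_sub, hP1.eq]
  have hQQ : Q * Q = Q := by
    simp only [hQ, sub_mul, mul_sub, one_mul, mul_one, hP2, sub_self, sub_zero]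
  obtain ⟨S, hSh, hSS⟩ : ∃ S : Matrix (Fin N) (Fin N) ℂ, Sᴴ = S ∧ S * S = ρ := by
    open scoped MatrixOrder in
    exact ⟨CFC.sqrt ρ, (CFC.sqrt_nonneg ρ).posSemidef.1, CFC.sqrt_mul_sqrt_self ρ hρ.nonneg⟩
  have hB : S * Q = 0 := by
    apply aux_trace_zero
    have e1 : (S * Q)ᴴ * (S * Q) = Q * ρ * Q := by
      rw [conjTranspose_mul, hSh, hQh]
      rw [Matrix.mul_assoc, ← Matrix.mul_assoc S S Q, hSS, Matrix.mul_assoc]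
    rw [e1]
    have : (Q * ρ * Q).trace = (ρ * Q).trace := by
      rw [Matrix.mul_assoc, trace_mul_comm, Matrix.mul_assoc, hQQ]
    rw [this, hQ, mul_sub, mul_one, trace_sub, htr, htrP, sub_self]
  have hρQ : ρ * Q = 0 := by rw [← hSS, Matrix.mul_assoc, hB, Matrix.mul_zero]
  have h1 : ρ * P = ρ := by
    have := hρQ
    rw [hQ, mul_sub, mul_one, sub_eq_zero] at this
    exact this.symm
  refine ⟨h1, ?_⟩
  calc P * ρ = (ρ * P)ᴴ := by rw [conjTranspose_mul, hP1.eq, hρ.1.eq]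
  _ = ρ := by rw [h1, hρ.1.eq]

lemma aux_smul_psd {N : ℕ} {A : Matrix (Fin N) (Fin N) ℂ} (hA : A.PosSemidef) {a : ℝ}
    (ha : 0 ≤ a) : (a • A).PosSemidef := by
  have key : a • A = (a : ℂ) • A := by
    ext i j; simp [Complex.real_smul]
  rw [key]
  constructor
  · unfold Matrix.IsHermitian
    rw [conjTranspose_smul, hA.1.eq]
    congr 1
    simp
  · exact (hA.smul (a := (a : ℂ)) (by exact_mod_cast ha)).2

lemma aux_face_convex {N : ℕ} (P : Matrix (Fin N) (Fin N) ℂ) :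
    Convex ℝ {ρ ∈ stateSet (Fin N) | (ρ * P).trace = 1} := by
  rintro ρ ⟨⟨hρ1, hρ2⟩, hρ3⟩ σ ⟨⟨hσ1, hσ2⟩, hσ3⟩ a b ha hb hab
  refine ⟨⟨(aux_smul_psd hρ1 ha).add (aux_smul_psd hσ1 hb), ?_⟩, ?_⟩
  · rw [trace_add, trace_smul, trace_smul, hρ2, hσ2]
    simp only [smul_eq_mul, Complex.real_smul, mul_one]
    exact_mod_cast hab
  · show ((a • ρ + b • σ) * P).trace = 1
    rw [add_mul, trace_add, Matrix.smul_mul, Matrix.smul_mul, trace_smul, trace_smul, hρ3, hσ3]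
    simp only [Complex.real_smul, mul_one]
    exact_mod_cast hab

lemma aux_proj {N p : ℕ} (Lsub : Fin p → Submodule ℂ (EuclideanSpace ℂ (Fin N)))
    (hindep : iSupIndep Lsub)
    (P : Fin p → Matrix (Fin N) (Fin N) ℂ)
    (hP : ∀ i, LinearMap.range (Matrix.toEuclideanLin (P i)) = Lsub i) :
    ∀ i : Fin p, ∃ E : Matrix (Fin N) (Fin N) ℂ,
      E * P i = P i ∧ ∀ j, j ≠ i → E * P j = 0 := by
  have hmul : ∀ A B : Matrix (Fin N) (Fin N) ℂ,
      Matrix.toEuclideanLin (A * B) = (Matrix.toEuclideanLin A).comp (Matrix.toEuclideanLin B) := by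
    intro A B
    apply LinearMap.ext
    intro v
    simp [Matrix.toEuclideanLin_apply, Matrix.mulVec_mulVec]
  intro i
  have hdis : Disjoint (Lsub i) (⨆ j, ⨆ _ : j ≠ i, Lsub j) := hindep i
  obtain ⟨W, hW⟩ := (Lsub i ⊔ ⨆ j, ⨆ _ : j ≠ i, Lsub j).exists_isCompl
  set S : Submodule ℂ (EuclideanSpace ℂ (Fin N)) := (⨆ j, ⨆ _ : j ≠ i, Lsub j) ⊔ W with hS
  have hcompl : IsCompl (Lsub i) S := by
    constructor
    · rw [Submodule.disjoint_def]
      intro x hxL hxS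
      rw [hS] at hxS
      obtain ⟨s, hs, w, hw, rfl⟩ := Submodule.mem_sup.mp hxS
      have hw0 : w ∈ (Lsub i ⊔ ⨆ j, ⨆ _ : j ≠ i, Lsub j) ⊓ W := by
        constructor
        · have h1 : s + w - s ∈ Lsub i ⊔ ⨆ j, ⨆ _ : j ≠ i, Lsub j :=
            Submodule.sub_mem _ (Submodule.mem_sup_left hxL) (Submodule.mem_sup_right hs)
          simpa using h1
        · exact hw
      rw [hW.inf_eq_bot] at hw0
      simp only [Submodule.mem_bot] at hw0
      subst hw0
      rw [add_zero] at hxL ⊢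
      have : s ∈ Lsub i ⊓ ⨆ j, ⨆ _ : j ≠ i, Lsub j := ⟨hxL, hs⟩
      rw [hdis.eq_bot] at this
      simpa using this
    · rw [codisjoint_iff, hS, ← sup_assoc]
      exact codisjoint_iff.mp hW.codisjoint
  set π : EuclideanSpace ℂ (Fin N) →ₗ[ℂ] EuclideanSpace ℂ (Fin N) :=
    (Lsub i).subtype ∘ₗ (Lsub i).projectionOnto S hcompl with hπ
  have hfix : ∀ x ∈ Lsub i, π x = x := by
    intro x hx
    have := Submodule.projectionOnto_apply_left hcompl ⟨x, hx⟩
    simp only [hπ, LinearMap.comp_apply, Submodule.subtype_apply]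
    rw [this]
  have hkill : ∀ x ∈ S, π x = 0 := by
    intro x hx
    have := Submodule.linearProjOfIsCompl_apply_right' hcompl hx
    simp only [hπ, LinearMap.comp_apply, Submodule.subtype_apply, this,
      ZeroMemClass.coe_zero]
  refine ⟨Matrix.toEuclideanLin.symm π, ?_, ?_⟩
  · apply Matrix.toEuclideanLin.injective
    rw [hmul, LinearEquiv.apply_symm_apply]
    apply LinearMap.ext
    intro v
    exact hfix _ (by rw [← hP i]; exact LinearMap.mem_range_self _ v)
  · intro j hj
    apply Matrix.toEuclideanLin.injective
    rw [hmul, LinearEquiv.apply_symm_apply, map_zero]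
    apply LinearMap.ext
    intro v
    have hle : Lsub j ≤ S := le_trans (le_iSup₂ (f := fun j (_ : j ≠ i) => Lsub j) j hj)
      le_sup_left
    simp only [LinearMap.comp_apply, LinearMap.zero_apply]
    exact hkill _ (hle (by rw [← hP j]; exact LinearMap.mem_range_self _ v))

end DirectConvexSumAux

open Matrix DirectConvexSumAux in
/-- If `L = L₁ ⊕ ⋯ ⊕ L_p` (internal direct sum of subspaces of `ℂⁿ`) and `Fᵢ` is the face
of the state space corresponding to `Lᵢ`, then the convex hull of the `Fᵢ` is their
direct convex sum. -/
theorem convexHull_faces_isDirectConvexSum {n p : ℕ}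
    (L : Submodule ℂ (EuclideanSpace ℂ (Fin n)))
    (Lsub : Fin p → Submodule ℂ (EuclideanSpace ℂ (Fin n)))
    (hindep : iSupIndep Lsub) (hsup : L = ⨆ i, Lsub i)
    (P : Fin p → Matrix (Fin n) (Fin n) ℂ)
    (hP : ∀ i, (P i).IsHermitian ∧ P i * P i = P i ∧
      LinearMap.range (Matrix.toEuclideanLin (P i)) = Lsub i)
    (F : Fin p → Set (Matrix (Fin n) (Fin n) ℂ))
    (hF : ∀ i, F i = {ρ ∈ stateSet (Fin n) | (ρ * P i).trace = 1}) :
    IsDirectConvexSum (convexHull ℝ (⋃ i, F i)) F := by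
  classical
  -- facts about members of the faces
  have hface : ∀ i ρ, ρ ∈ F i →
      ρ.PosSemidef ∧ ρ.trace = 1 ∧ ρ * P i = ρ ∧ P i * ρ = ρ := by
    intro i ρ hρ
    rw [hF i] at hρ
    obtain ⟨⟨h1, h2⟩, h3⟩ := hρ
    obtain ⟨e1, e2⟩ := aux_face (hP i).1 (hP i).2.1 h1 h2 h3
    exact ⟨h1, h2, e1, e2⟩
  have hFconv : ∀ i, Convex ℝ (F i) := fun i => (hF i) ▸ aux_face_convex (P i)
  constructor
  · -- existence of a representation
    set T : Set (Matrix (Fin n) (Fin n) ℂ) :=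
      {x | ∃ (lam : Fin p → ℝ) (pt : Fin p → Matrix (Fin n) (Fin n) ℂ),
        (∀ i, 0 ≤ lam i) ∧ (∑ i, lam i) = 1 ∧ (∀ i, lam i ≠ 0 → pt i ∈ F i) ∧
        x = ∑ i, lam i • pt i} with hT
    have hsub : (⋃ i, F i) ⊆ T := by
      intro x hx
      obtain ⟨j, hxj⟩ := Set.mem_iUnion.mp hx
      refine ⟨fun i => if i = j then 1 else 0, fun _ => x, ?_, ?_, ?_, ?_⟩
      · intro i; by_cases h : i = j <;> simp [h]
      · simp
      · intro i hi
        have : i = j := by by_contra hc; simp [hc] at hi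
        rw [this]; exact hxj
      · simp [ite_smul]
    have hTconv : Convex ℝ T := by
      rintro x ⟨lam, pt, h1, h2, h3, rfl⟩ y ⟨mu, qt, g1, g2, g3, rfl⟩ a b ha hb hab
      refine ⟨fun i => a * lam i + b * mu i,
        fun i => if h : a * lam i + b * mu i = 0 then 0
          else ((a * lam i) / (a * lam i + b * mu i)) • pt i +
            ((b * mu i) / (a * lam i + b * mu i)) • qt i, ?_, ?_, ?_, ?_⟩
      · intro i
        exact add_nonneg (mul_nonneg ha (h1 i)) (mul_nonneg hb (g1 i))
      · rw [Finset.sum_add_distrib, ← Finset.mul_sum, ← Finset.mul_sum, h2, g2,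
          mul_one, mul_one, hab]
      · intro i hi
        dsimp only at hi ⊢
        rw [dif_neg hi]
        have hc : 0 ≤ a * lam i := mul_nonneg ha (h1 i)
        have hd : 0 ≤ b * mu i := mul_nonneg hb (g1 i)
        set c := a * lam i
        set d := b * mu i
        have hs : 0 < c + d := lt_of_le_of_ne (add_nonneg hc hd) (Ne.symm hi)
        by_cases hc0 : c = 0
        · have hd0 : d ≠ 0 := by intro h0; exact hi (by rw [hc0, h0, add_zero]
)
          have hmu : mu i ≠ 0 := by
            intro h0; exact hd0 (by simp [d, h0])
          have : c / (c + d) = 0 := by rw [hc0, zero_div]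
          rw [this, zero_smul, zero_add]
          have : d / (c + d) = 1 := by rw [hc0, zero_add]; exact div_self hd0
          rw [this, one_smul]
          exact g3 i hmu
        · by_cases hd0 : d = 0
          · have hlam : lam i ≠ 0 := by
              intro h0; exact hc0 (by simp [c, h0])
            have e1 : d / (c + d) = 0 := by rw [hd0, zero_div]
            have e2 : c / (c + d) = 1 := by rw [hd0, add_zero]; exact div_self hc0
            rw [e1, zero_smul, add_zero, e2, one_smul]
            exact h3 i hlam
          · have hlam : lam i ≠ 0 := by intro h0; exact hc0 (by simp [c, h0])
            have hmu : mu i ≠ 0 := by intro h0; exact hd0 (by simp [d, h0])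
            refine hFconv i (h3 i hlam) (g3 i hmu) (div_nonneg hc hs.le)
              (div_nonneg hd hs.le) ?_
            field_simp
      · rw [Finset.smul_sum, Finset.smul_sum, ← Finset.sum_add_distrib]
        apply Finset.sum_congr rfl
        intro i _
        dsimp only
        by_cases h0 : a * lam i + b * mu i = 0
        · have hc : a * lam i = 0 ∧ b * mu i = 0 := by
            constructor
            · by_contra hc
              have : 0 < a * lam i := lt_of_le_of_ne (mul_nonneg ha (h1 i)) (Ne.symm hc)
              nlinarith [mul_nonneg hb (g1 i)]
            · by_contra hc
              have : 0 < b * mu i := lt_of_le_of_ne (mul_nonneg hb (g1 i)) (Ne.symm hc)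
              nlinarith [mul_nonneg ha (h1 i)]
          rw [dif_pos h0, smul_zero, smul_smul, smul_smul, hc.1, hc.2, zero_smul,
            zero_smul, add_zero]
        · rw [dif_neg h0, smul_add, smul_smul, smul_smul, smul_smul, smul_smul]
          congr 2
          · field_simp
          · field_simp
    intro x hx
    exact convexHull_min hsub hTconv hx
  · -- uniqueness
    intro lam lam' pt pt' h1 h2 h3 g1 g2 g3 heq i
    obtain ⟨E, hE1, hE2⟩ := aux_proj Lsub hindep P (fun i => (hP i).2.2) i
    -- sandwiching kills all but the i-th term
    have key : ∀ (la : Fin p → ℝ) (q : Fin p → Matrix (Fin n) (Fin n) ℂ),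
        (∀ j, la j ≠ 0 → q j ∈ F j) →
        E * (∑ j, la j • q j) * Eᴴ = la i • q i := by
      intro la q hq
      rw [Matrix.mul_sum, Matrix.sum_mul]
      rw [Finset.sum_eq_single i]
      · by_cases h0 : la i = 0
        · simp [h0]
        · obtain ⟨hpsd, _, hqP, hPq⟩ := hface i (q i) (hq i h0)
          have e1 : E * q i = q i := by rw [← hPq, ← Matrix.mul_assoc, hE1]
          have e2 : q i * Eᴴ = q i := by
            have h := congrArg Matrix.conjTranspose e1
            rwa [Matrix.conjTranspose_mul, hpsd.1.eq] at h
          rw [Matrix.mul_smul, Matrix.smul_mul, e1, e2]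
      · intro j _ hj
        by_cases h0 : la j = 0
        · simp [h0]
        · obtain ⟨hpsd, _, hqP, hPq⟩ := hface j (q j) (hq j h0)
          have e1 : E * q j = 0 := by rw [← hPq, ← Matrix.mul_assoc, hE2 j hj,
            Matrix.zero_mul]
          rw [Matrix.mul_smul, Matrix.smul_mul, e1, Matrix.zero_mul, smul_zero]
      · intro h; exact absurd (Finset.mem_univ i) h
    have k1 : E * (∑ j, lam j • pt j) * Eᴴ = lam i • pt i := key lam pt h3
    have k2 : E * (∑ j, lam' j • pt' j) * Eᴴ = lam' i • pt' i := key lam' pt' g3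
    have kk : lam i • pt i = lam' i • pt' i := by rw [← k1, ← k2, heq]
    -- compare traces
    have htr : ∀ (la : Fin p → ℝ) (q : Fin p → Matrix (Fin n) (Fin n) ℂ),
        (∀ j, la j ≠ 0 → q j ∈ F j) → (la i • q i).trace = ((la i : ℝ) : ℂ) := by
      intro la q hq
      by_cases h0 : la i = 0
      · simp [h0]
      · rw [trace_smul, (hface i (q i) (hq i h0)).2.1]
        simp [Complex.real_smul]
    have hlam : lam i = lam' i := by
      have t1 := htr lam pt h3
      have t2 := htr lam' pt' g3
      rw [kk] at t1
      rw [t2] at t1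
      exact_mod_cast t1.symm
    refine ⟨hlam, fun h0 => ?_⟩
    rw [← hlam] at kk
    exact smul_right_injective _ h0 kk

end
end

section
/- If x_1,…,x_p are linearly independent unit vectors in ℂⁿ, then the corresponding vector states ω_{x_1},…,ω_{x_p} are linearly independent (as elements of the real vector space of hermitian n×n matrices), and the convex hull of {ω_{x_1},…,ω_{x_p}} is a simplex. -/
open scoped Kronecker ComplexOrder

noncomputable section

/-- The vector state (rank-one projection onto `ℂx`) associated to a unit vector `x`. -/
def vecState {ι : Type*} [Fintype ι] (x : EuclideanSpace ℂ ι) : Matrix ι ι ℂ :=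
  Matrix.of fun i j => x i * (starRingEnd ℂ) (x j)

/-- A (finite-dimensional) convex set is a simplex: every point has a unique
representation as a convex combination of its extreme points. -/
def IsSimplex {E : Type*} [AddCommGroup E] [Module ℝ E] (C : Set E) : Prop :=
  ∀ x ∈ C, ∃! w : E →₀ ℝ,
    ↑w.support ⊆ Set.extremePoints ℝ C ∧ (∀ y, 0 ≤ w y) ∧
    (w.sum fun _ a => a) = 1 ∧ (w.sum fun y a => a • y) = x

/-- If `x₁, …, x_p` are linearly independent unit vectors in `ℂⁿ`, then the vector states
`ω_{x₁}, …, ω_{x_p}` are linearly independent over `ℝ`, and their convex hull is a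
simplex. -/
theorem vecStates_linearIndependent_and_simplex {n p : ℕ}
    (x : Fin p → EuclideanSpace ℂ (Fin n))
    (hx : ∀ i, ‖x i‖ = 1) (hli : LinearIndependent ℂ x) :
    LinearIndependent ℝ (fun i => vecState (x i)) ∧
    IsSimplex (convexHull ℝ (Set.range fun i => vecState (x i))) := by
  classical
  set ω : Fin p → Matrix (Fin n) (Fin n) ℂ := fun i => vecState (x i) with hωdef
  -- Step 1: linear independence over ℂ.
  have hliC : LinearIndependent ℂ ω := by
    rw [Fintype.linearIndependent_iff]
    intro c hc j
    have hab : ∀ a b, (∑ i, c i * (x i a * (starRingEnd ℂ) (x i b))) = 0 := by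
      intro a b
      have h := congr_fun (congr_fun hc a) b
      simpa [ω, vecState, Matrix.sum_apply, mul_assoc] using h
    have key : ∀ i, c i * (∑ b, (starRingEnd ℂ) (x i b) * x j b) = 0 := by
      have h2 : (∑ i, (c i * ∑ b, (starRingEnd ℂ) (x i b) * x j b) • x i) = 0 := by
        refine PiLp.ext fun a => ?_
        have happ : (∑ i, (c i * ∑ b, (starRingEnd ℂ) (x i b) * x j b) • x i) a
            = ∑ i, (c i * ∑ b, (starRingEnd ℂ) (x i b) * x j b) * x i a := by
          rw [show (∑ i, (c i * ∑ b, (starRingEnd ℂ) (x i b) * x j b) • x i) a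
              = EuclideanSpace.proj (𝕜 := ℂ) a
                (∑ i, (c i * ∑ b, (starRingEnd ℂ) (x i b) * x j b) • x i) from rfl,
            map_sum]
          simp [smul_eq_mul]
        rw [show ((0 : EuclideanSpace ℂ (Fin n)) a) = 0 from rfl, happ]
        calc ∑ i, (c i * ∑ b, (starRingEnd ℂ) (x i b) * x j b) * x i a
            = ∑ i, ∑ b, (c i * (x i a * (starRingEnd ℂ) (x i b))) * x j b := by
              refine Finset.sum_congr rfl fun i _ => ?_
              rw [Finset.mul_sum, Finset.sum_mul]
              refine Finset.sum_congr rfl fun b _ => by ring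
          _ = ∑ b, (∑ i, (c i * (x i a * (starRingEnd ℂ) (x i b)))) * x j b := by
              rw [Finset.sum_comm]
              simp [Finset.sum_mul]
          _ = 0 := by simp [hab]
      exact fun i => Fintype.linearIndependent_iff.mp hli _ h2 i
    have hjj := key j
    have hnorm : (∑ b, (starRingEnd ℂ) (x j b) * x j b) = 1 := by
      have : (inner ℂ (x j) (x j) : ℂ) = (‖x j‖ : ℂ) ^ 2 := inner_self_eq_norm_sq_to_K (x j)
      rw [PiLp.inner_apply] at this
      simp only [RCLike.inner_apply, mul_comm ((x j).ofLp _)] at this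
      rw [this, hx j]
      norm_num
    rw [hnorm, mul_one] at hjj
    exact hjj
  have hliR : LinearIndependent ℝ ω := by
    refine hliC.restrict_scalars ?_
    intro r s h
    simpa using h
  refine ⟨hliR, ?_⟩
  have hωinj : Function.Injective ω := hliR.injective
  -- uniqueness of real coefficients
  have huniq : ∀ c d : Fin p → ℝ, (∑ i, c i • ω i) = (∑ i, d i • ω i) → c = d := by
    intro c d h
    have h0 : (∑ i, (c i - d i) • ω i) = 0 := by
      simp [sub_smul, Finset.sum_sub_distrib, h]
    funext i
    have := Fintype.linearIndependent_iff.mp hliR _ h0 i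
    linarith [this]
  -- representation of points of the hull
  have hrepr : ∀ z ∈ convexHull ℝ (Set.range ω), ∃ c : Fin p → ℝ,
      (∀ i, 0 ≤ c i) ∧ (∑ i, c i) = 1 ∧ (∑ i, c i • ω i) = z := by
    intro z hz
    rw [convexHull_range_eq_exists_affineCombination] at hz
    obtain ⟨s, wgt, h0, h1, h2⟩ := hz
    refine ⟨fun i => if i ∈ s then wgt i else 0,
      fun i => by by_cases h : i ∈ s <;> simp [h, h0 i], ?_, ?_⟩
    · rw [Finset.sum_ite_mem, Finset.univ_inter, h1]
    · rw [← h2, s.affineCombination_eq_linear_combination ω wgt h1]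
      rw [show (∑ i, (if i ∈ s then wgt i else 0) • ω i)
          = ∑ i, if i ∈ s then wgt i • ω i else 0 from
        Finset.sum_congr rfl fun i _ => by split <;> simp]
      rw [Finset.sum_ite_mem, Finset.univ_inter]
  -- extreme points are exactly the vector states
  have hext : Set.extremePoints ℝ (convexHull ℝ (Set.range ω)) = Set.range ω := by
    refine Set.Subset.antisymm extremePoints_convexHull_subset ?_
    rintro _ ⟨j, rfl⟩
    refine ⟨subset_convexHull ℝ _ ⟨j, rfl⟩, ?_⟩
    rintro y hy z hz ⟨a, b, ha, hb, hab, habz⟩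
    obtain ⟨cy, hcy0, hcy1, hcy2⟩ := hrepr y hy
    obtain ⟨cz, hcz0, hcz1, hcz2⟩ := hrepr z hz
    have hcomb : (∑ i, (a * cy i + b * cz i) • ω i) = ∑ i, (if i = j then (1:ℝ) else 0) • ω i := by
      simp only [add_smul, mul_smul, Finset.sum_add_distrib, ← Finset.smul_sum, hcy2, hcz2]
      rw [habz]
      simp [Finset.sum_ite_eq']
    have hce := huniq _ _ hcomb
    have hzero : ∀ i, i ≠ j → cy i = 0 ∧ cz i = 0 := by
      intro i hij
      have hthis := congr_fun hce i
      simp only [if_neg hij] at hthis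
      have hy0 : a * cy i = 0 := by
        nlinarith [mul_nonneg ha.le (hcy0 i), mul_nonneg hb.le (hcz0 i)]
      have hz0 : b * cz i = 0 := by
        nlinarith [mul_nonneg ha.le (hcy0 i), mul_nonneg hb.le (hcz0 i)]
      exact ⟨(mul_eq_zero.mp hy0).resolve_left ha.ne', (mul_eq_zero.mp hz0).resolve_left hb.ne'⟩
    have hyj : cy j = 1 := by
      have : (∑ i, cy i) = cy j :=
        Finset.sum_eq_single j (fun i _ h => (hzero i h).1) (by simp)
      rw [this] at hcy1; exact hcy1
    have hzj : cz j = 1 := by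
      have : (∑ i, cz i) = cz j :=
        Finset.sum_eq_single j (fun i _ h => (hzero i h).2) (by simp)
      rw [this] at hcz1; exact hcz1
    · rw [← hcy2, Finset.sum_eq_single j (fun i _ h => by simp [(hzero i h).1]) (by simp),
        hyj, one_smul]
  -- the simplex property
  intro z hz
  obtain ⟨c, hc0, hc1, hc2⟩ := hrepr z hz
  set w : Matrix (Fin n) (Fin n) ℂ →₀ ℝ := ∑ i, Finsupp.single (ω i) (c i) with hwdef
  have hwapp : ∀ m, w m = ∑ i, (if ω i = m then c i else 0) := by
    intro m
    rw [hwdef, Finsupp.finset_sum_apply]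
    refine Finset.sum_congr rfl fun i _ => ?_
    simp [Finsupp.single_apply]
  have hwω : ∀ j, w (ω j) = c j := by
    intro j
    rw [hwapp, Finset.sum_eq_single j (fun i _ h => if_neg fun he => h (hωinj he)) (by simp)]
    simp
  have hwsupp : ↑w.support ⊆ Set.range ω := by
    intro m hm
    by_contra hmem
    have : w m = 0 := by
      rw [hwapp]
      refine Finset.sum_eq_zero fun i _ => ?_
      rw [if_neg]
      exact fun h => hmem ⟨i, h⟩
    simp only [Finset.mem_coe, Finsupp.mem_support_iff] at hm
    exact hm this
  have hsum1 : (w.sum fun _ a => a) = 1 := by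
    rw [hwdef, ← Finsupp.sum_finsetSum_index (fun _ => rfl) (fun _ _ _ => rfl)]
    rw [Finset.sum_congr rfl fun i _ => Finsupp.sum_single_index rfl]
    exact hc1
  have hsum2 : (w.sum fun y a => a • y) = z := by
    rw [hwdef, ← Finsupp.sum_finsetSum_index (fun y => zero_smul ℝ y) (fun y a b => add_smul a b y)]
    rw [Finset.sum_congr rfl fun i _ => Finsupp.sum_single_index (zero_smul ℝ (ω i))]
    exact hc2
  refine ⟨w, ⟨by rw [hext]; exact hwsupp, ?_, hsum1, hsum2⟩, ?_⟩
  · intro y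
    rw [hwapp]
    refine Finset.sum_nonneg fun i _ => ?_
    split <;> simp [hc0 i]
  · rintro w' ⟨hsupp', hpos', hsum1', hsum2'⟩
    rw [hext] at hsupp'
    set c' : Fin p → ℝ := fun i => w' (ω i) with hc'def
    have hsub : w'.support ⊆ Finset.image ω Finset.univ := by
      intro m hm
      obtain ⟨i, hi⟩ := hsupp' hm
      exact Finset.mem_image.mpr ⟨i, Finset.mem_univ i, hi⟩
    have hsum2'' : (∑ i, c' i • ω i) = z := by
      rw [← hsum2', Finsupp.sum_of_support_subset w' hsub _ (fun m _ => zero_smul ℝ m)]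
      rw [Finset.sum_image (fun a _ b _ h => hωinj h)]
    have hcc : c' = c := huniq _ _ (by rw [hsum2'', hc2])
    ext m
    by_cases hm : m ∈ Set.range ω
    · obtain ⟨i, rfl⟩ := hm
      rw [hwω i, show w' (ω i) = c' i from rfl, hcc]
    · have h1 : w' m = 0 := by
        by_contra h
        exact hm (hsupp' (Finsupp.mem_support_iff.mpr h))
      have h2 : w m = 0 := by
        by_contra h
        exact hm (hwsupp (Finsupp.mem_support_iff.mpr h))
      rw [h1, h2]

end
end

section
/- Let e_1,…,e_p ∈ ℂᵐ and f_1,…,f_p ∈ ℂⁿ be unit vectors with the lines ℂe_1,…,ℂe_p pairwise distinct and f_1,…,f_p linearly independent, and let λ_1,…,λ_p be nonnegative numbers with Σ λ_i = 1. Then the separable state ω = Σ_i λ_i ω_{e_i⊗f_i} has a unique representation as a convex combination of pure product states: if ω = Σ_{j=1}^r μ_j ω_{x_j⊗y_j} with all μ_j > 0, Σ μ_j = 1, and the pure product states ω_{x_j⊗y_j} pairwise distinct, then {(μ_j, ω_{x_j⊗y_j})} coincides, up to reordering, with {(λ_i, ω_{e_i⊗f_i}) : λ_i > 0}. -/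
open scoped Kronecker ComplexOrder

noncomputable section

/-- The set of separable states on `B(ℂᵐ ⊗ ℂⁿ)`: convex combinations of pure product states. -/
def sepSet (m n : ℕ) : Set (Matrix (Fin m × Fin n) (Fin m × Fin n) ℂ) :=
  {ρ | ∃ (r : ℕ) (lam : Fin r → ℝ) (x : Fin r → EuclideanSpace ℂ (Fin m))
        (y : Fin r → EuclideanSpace ℂ (Fin n)),
      (∀ i, 0 ≤ lam i) ∧ (∑ i, lam i) = 1 ∧ (∀ i, ‖x i‖ = 1) ∧ (∀ i, ‖y i‖ = 1) ∧
      ρ = ∑ i, lam i • vecState (tensorVec (x i) (y i))}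

/-- `F` is a face of the convex set `C`. -/
def IsFace {E : Type*} [AddCommGroup E] [Module ℝ E] (C F : Set E) : Prop :=
  F ⊆ C ∧ Convex ℝ F ∧
    ∀ ⦃x⦄, x ∈ C → ∀ ⦃y⦄, y ∈ C → ∀ ⦃z⦄, z ∈ openSegment ℝ x y → z ∈ F → x ∈ F ∧ y ∈ F

/-- The smallest face of `C` containing `X`. -/
def faceGen {E : Type*} [AddCommGroup E] [Module ℝ E] (C X : Set E) : Set E :=
  ⋂₀ {F | IsFace C F ∧ X ⊆ F}

/-- Two convex sets (possibly in different ambient spaces) are affinely isomorphic. -/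
def AffIsomorphic {E F' : Type*} [AddCommGroup E] [Module ℝ E] [AddCommGroup F'] [Module ℝ F']
    (A : Set E) (B : Set F') : Prop :=
  ∃ φ : E → F', Set.BijOn φ A B ∧
    ∀ x ∈ A, ∀ y ∈ A, ∀ t : ℝ, 0 ≤ t → t ≤ 1 →
      φ (t • x + (1 - t) • y) = t • φ x + (1 - t) • φ y

namespace UniqueDecompAux

open Finset Complex

/-- The sesquilinear functional `M ↦ u* M u` on matrices, as a `ℂ`-linear map. -/
def quadLin {ι : Type*} [Fintype ι] (u : ι → ℂ) : Matrix ι ι ℂ →ₗ[ℂ] ℂ where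
  toFun M := ∑ p, ∑ q, (starRingEnd ℂ) (u p) * M p q * u q
  map_add' M N := by
    simp only [Matrix.add_apply, ← Finset.sum_add_distrib]
    refine Finset.sum_congr rfl fun p _ => Finset.sum_congr rfl fun q _ => by ring
  map_smul' c M := by
    simp only [Matrix.smul_apply, smul_eq_mul, RingHom.id_apply, Finset.mul_sum]
    refine Finset.sum_congr rfl fun p _ => Finset.sum_congr rfl fun q _ => by ring

lemma real_smul_matrix {ι : Type*} (c : ℝ) (M : Matrix ι ι ℂ) :
    c • M = (c : ℂ) • M := by
  ext i j
  simp [Matrix.smul_apply, Complex.real_smul]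

lemma quadLin_vecState {ι : Type*} [Fintype ι] (u : ι → ℂ) (v : EuclideanSpace ℂ ι) :
    quadLin u (vecState v) =
      (Complex.normSq (∑ q, (starRingEnd ℂ) (v q) * u q) : ℂ) := by
  have : quadLin u (vecState v) =
      (∑ p, (starRingEnd ℂ) (u p) * v p) * (∑ q, (starRingEnd ℂ) (v q) * u q) := by
    rw [Finset.sum_mul_sum]
    refine Finset.sum_congr rfl fun p _ => Finset.sum_congr rfl fun q _ => by
      show (starRingEnd ℂ) (u p) * (v p * (starRingEnd ℂ) (v q)) * u q = _
      ring
  rw [this, Complex.normSq_eq_conj_mul_self]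
  rw [map_sum]
  congr 1
  refine Finset.sum_congr rfl fun p _ => ?_
  simp only [map_mul, RingHomCompTriple.comp_apply, RingHom.id_apply,
    Complex.conj_conj]
  ring

lemma eucl_sum_apply {ι κ : Type*} (s : Finset κ) (g : κ → EuclideanSpace ℂ ι) (a : ι) :
    (∑ k ∈ s, g k) a = ∑ k ∈ s, g k a := by
  induction s using Finset.cons_induction with
  | empty => rfl
  | cons k s hk ih => rw [Finset.sum_cons, Finset.sum_cons, ← ih]; rfl

lemma eucl_exists_ne_zero {ι : Type*} (v : EuclideanSpace ℂ ι) (hv : v ≠ 0) :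
    ∃ a, v a ≠ 0 := by
  by_contra h
  push_neg at h
  exact hv (PiLp.ext (fun a => by simp [h a]))

lemma norm_one_ne_zero {ι : Type*} [Fintype ι] (v : EuclideanSpace ℂ ι) (hv : ‖v‖ = 1) :
    v ≠ 0 := by
  intro h
  rw [h, norm_zero] at hv
  exact zero_ne_one hv

lemma sum_conj_self {ι : Type*} [Fintype ι] (v : EuclideanSpace ℂ ι) (hv : ‖v‖ = 1) :
    ∑ a, (starRingEnd ℂ) (v a) * v a = 1 := by
  have h := inner_self_eq_norm_sq_to_K (𝕜 := ℂ) v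
  rw [PiLp.inner_apply] at h
  simp only [RCLike.inner_apply] at h
  rw [show (∑ a, (starRingEnd ℂ) (v a) * v a) = ∑ a, v a * (starRingEnd ℂ) (v a) from
    Finset.sum_congr rfl fun a _ => mul_comm _ _, h, hv]
  norm_num

lemma tensor_sum_conj_self {m n : ℕ} (x : EuclideanSpace ℂ (Fin m))
    (y : EuclideanSpace ℂ (Fin n)) (hx : ‖x‖ = 1) (hy : ‖y‖ = 1) :
    ∑ q : Fin m × Fin n, (starRingEnd ℂ) (tensorVec x y q) * tensorVec x y q = 1 := by
  rw [Fintype.sum_prod_type]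
  have : ∀ a : Fin m, ∑ b : Fin n,
      (starRingEnd ℂ) (tensorVec x y (a, b)) * tensorVec x y (a, b)
      = ((starRingEnd ℂ) (x a) * x a) * ∑ b, (starRingEnd ℂ) (y b) * y b := by
    intro a
    rw [Finset.mul_sum]
    refine Finset.sum_congr rfl fun b _ => ?_
    show (starRingEnd ℂ) (x a * y b) * (x a * y b) = _
    rw [map_mul]; ring
  simp_rw [this]
  rw [← Finset.sum_mul, sum_conj_self x hx, sum_conj_self y hy, one_mul]

lemma linind_tensor {m n p : ℕ} (e : Fin p → EuclideanSpace ℂ (Fin m))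
    (f : Fin p → EuclideanSpace ℂ (Fin n))
    (he0 : ∀ i, e i ≠ 0) (hf : LinearIndependent ℂ f) :
    LinearIndependent ℂ (fun i => tensorVec (e i) (f i)) := by
  rw [Fintype.linearIndependent_iff]
  intro g hg i
  obtain ⟨a, ha⟩ := eucl_exists_ne_zero (e i) (he0 i)
  have key : ∑ i, (g i * e i a) • f i = 0 := by
    apply PiLp.ext
    intro b
    have h := congrFun (congrArg (fun z : EuclideanSpace ℂ (Fin m × Fin n) =>
      (z : Fin m × Fin n → ℂ)) hg) (a, b)
    simp only at h
    rw [eucl_sum_apply] at h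
    have : ∀ i, (g i • tensorVec (e i) (f i)) (a, b) = (g i * e i a) * f i b := by
      intro i
      show g i * (e i a * f i b) = _
      ring
    rw [Finset.sum_congr rfl fun i _ => this i] at h
    rw [eucl_sum_apply]
    exact h
  have := (Fintype.linearIndependent_iff.mp hf) _ key i
  rcases mul_eq_zero.mp this with h | h
  · exact h
  · exact absurd h ha

lemma prod_in_span {m n p : ℕ}
    (e : Fin p → EuclideanSpace ℂ (Fin m)) (f : Fin p → EuclideanSpace ℂ (Fin n))
    (he0 : ∀ i, e i ≠ 0) (hf : LinearIndependent ℂ f)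
    (hdist : ∀ i j : Fin p, i ≠ j → Submodule.span ℂ {e i} ≠ Submodule.span ℂ {e j})
    (x : EuclideanSpace ℂ (Fin m)) (y : EuclideanSpace ℂ (Fin n))
    (hx0 : x ≠ 0) (hy0 : y ≠ 0) (c : Fin p → ℂ)
    (hc : (∑ i, c i • tensorVec (e i) (f i)) = tensorVec x y) :
    ∃ (i0 : Fin p) (c0 : ℂ), c0 ≠ 0 ∧ tensorVec x y = c0 • tensorVec (e i0) (f i0) := by
  obtain ⟨a0, ha0⟩ := eucl_exists_ne_zero x hx0
  obtain ⟨b0, hb0⟩ := eucl_exists_ne_zero y hy0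
  -- pointwise identity
  have hpt : ∀ (a : Fin m) (b : Fin n), (∑ i, c i * (e i a * f i b)) = x a * y b := by
    intro a b
    have h := congrFun (congrArg (fun z : EuclideanSpace ℂ (Fin m × Fin n) =>
      (z : Fin m × Fin n → ℂ)) hc) (a, b)
    simp only at h
    rw [eucl_sum_apply] at h
    exact h
  -- slicewise identity
  have hsl : ∀ a : Fin m, (∑ i, (c i * e i a) • f i) = (x a : ℂ) • y := by
    intro a
    apply PiLp.ext
    intro b
    rw [eucl_sum_apply]
    show ∑ i, (c i * e i a) * f i b = x a * y b
    rw [← hpt a b]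
    exact Finset.sum_congr rfl fun i _ => by ring
  -- coefficient relations
  have hrel : ∀ (a : Fin m) (i : Fin p), x a0 * (c i * e i a) = x a * (c i * e i a0) := by
    intro a i
    have h0 : (∑ i, (x a0 * (c i * e i a) - x a * (c i * e i a0)) • f i) = 0 := by
      have : ∀ i, (x a0 * (c i * e i a) - x a * (c i * e i a0)) • f i =
          x a0 • ((c i * e i a) • f i) - x a • ((c i * e i a0) • f i) := by
        intro i
        rw [sub_smul, smul_smul, smul_smul]
      rw [Finset.sum_congr rfl fun i _ => this i, Finset.sum_sub_distrib,
        ← Finset.smul_sum, ← Finset.smul_sum, hsl a, hsl a0, smul_smul, smul_smul,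
        mul_comm (x a0) (x a), sub_self]
    have := (Fintype.linearIndependent_iff.mp hf) _ h0 i
    exact sub_eq_zero.mp this
  -- some coefficient is nonzero
  have hex : ∃ i0, c i0 ≠ 0 := by
    by_contra h
    push_neg at h
    have : (∑ i, c i • tensorVec (e i) (f i)) = 0 := by
      refine Finset.sum_eq_zero fun i _ => ?_
      rw [h i, zero_smul]
    rw [this] at hc
    have := congrFun (congrArg (fun z : EuclideanSpace ℂ (Fin m × Fin n) =>
      (z : Fin m × Fin n → ℂ)) hc) (a0, b0)
    simp only at this
    exact mul_ne_zero ha0 hb0 (this.symm)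
  obtain ⟨i0, hi0⟩ := hex
  -- each nonzero coefficient forces the line of `e i` to be the line of `x`
  have hspan : ∀ i, c i ≠ 0 → Submodule.span ℂ {e i} = Submodule.span ℂ {x} := by
    intro i hci
    have ht : e i = (e i a0 / x a0) • x := by
      apply PiLp.ext
      intro a
      show e i a = (e i a0 / x a0) * x a
      have h := hrel a i
      field_simp
      have : x a0 * c i * e i a = x a * e i a0 * c i := by
        have := hrel a i
        ring_nf
        ring_nf at this
        linear_combination this
      exact mul_right_cancel₀ hci (by linear_combination this)
    have hne : (e i a0 / x a0) ≠ 0 := by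
      intro h
      apply he0 i
      rw [ht, h, zero_smul]
    rw [ht]
    exact Submodule.span_singleton_smul_eq (IsUnit.mk0 _ hne) x
  have huniq : ∀ i, i ≠ i0 → c i = 0 := by
    intro i hi
    by_contra hci
    exact hdist i i0 hi ((hspan i hci).trans (hspan i0 hi0).symm)
  refine ⟨i0, c i0, hi0, ?_⟩
  rw [← hc]
  exact Finset.sum_eq_single i0 (fun i _ hi => by rw [huniq i hi, zero_smul])
    (fun h => absurd (Finset.mem_univ i0) h)

/-- Dual vectors to a linearly independent family, via the Gram matrix. -/
lemma exists_dual {p : ℕ} {N : Type*} [Fintype N]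
    (v : Fin p → EuclideanSpace ℂ N) (hv : LinearIndependent ℂ v) (k : Fin p) :
    ∃ u : EuclideanSpace ℂ N,
      ∀ i, (∑ q, (starRingEnd ℂ) (v i q) * u q) = if i = k then 1 else 0 := by
  set G : Matrix (Fin p) (Fin p) ℂ :=
    Matrix.of (fun i l => ∑ q, (starRingEnd ℂ) (v i q) * v l q) with hG
  have hmv : ∀ (c : Fin p → ℂ) (i : Fin p),
      G.mulVec c i = ∑ q, (starRingEnd ℂ) (v i q) * (∑ l, c l • v l) q := by
    intro c i
    show ∑ l, G i l * c l = _
    have : ∀ q, ((∑ l, c l • v l) q : ℂ) = ∑ l, c l * v l q := by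
      intro q
      rw [eucl_sum_apply]
      rfl
    simp_rw [this, Finset.mul_sum, hG]
    rw [Finset.sum_comm]
    refine Finset.sum_congr rfl fun l _ => ?_
    rw [Matrix.of_apply, Finset.sum_mul]
    refine Finset.sum_congr rfl fun q _ => by ring
  have hinj : Function.Injective G.mulVecLin := by
    rw [injective_iff_map_eq_zero]
    intro c hc
    have hc' : G.mulVec c = 0 := hc
    set s : EuclideanSpace ℂ N := ∑ l, c l • v l with hs
    have h1 : ∀ i, (∑ q, (starRingEnd ℂ) (v i q) * s q) = 0 := by
      intro i
      rw [← hmv c i, hc']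
      rfl
    have h2 : (∑ q, (starRingEnd ℂ) (s q) * s q) = 0 := by
      have hsq : ∀ q, ((starRingEnd ℂ) (s q) : ℂ) = ∑ i, (starRingEnd ℂ) (c i) * (starRingEnd ℂ) (v i q) := by
        intro q
        have : (s q : ℂ) = ∑ i, c i * v i q := by
          rw [hs, eucl_sum_apply]
          rfl
        rw [this, map_sum]
        exact Finset.sum_congr rfl fun i _ => by rw [map_mul]
      calc ∑ q, (starRingEnd ℂ) (s q) * s q
          = ∑ q, ∑ i, (starRingEnd ℂ) (c i) * ((starRingEnd ℂ) (v i q) * s q) := by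
            refine Finset.sum_congr rfl fun q _ => ?_
            rw [hsq q, Finset.sum_mul]
            exact Finset.sum_congr rfl fun i _ => by ring
        _ = ∑ i, (starRingEnd ℂ) (c i) * (∑ q, (starRingEnd ℂ) (v i q) * s q) := by
            rw [Finset.sum_comm]
            exact Finset.sum_congr rfl fun i _ => by rw [Finset.mul_sum]
        _ = 0 := by
            refine Finset.sum_eq_zero fun i _ => ?_
            rw [h1 i, mul_zero]
    have h3 : s = 0 := by
      apply PiLp.ext
      intro q
      have : (∑ q, (Complex.normSq (s q) : ℂ)) = 0 := by
        rw [← h2]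
        exact Finset.sum_congr rfl fun q _ => (Complex.normSq_eq_conj_mul_self).symm ▸ rfl
      have hr : (∑ q, Complex.normSq (s q)) = 0 := by
        exact_mod_cast this
      have := (Finset.sum_eq_zero_iff_of_nonneg
        (fun q _ => Complex.normSq_nonneg (s q))).mp hr q (Finset.mem_univ q)
      exact Complex.normSq_eq_zero.mp this
    have h4 : (∑ l, c l • v l) = 0 := by rw [← hs]; exact h3
    exact funext fun i => (Fintype.linearIndependent_iff.mp hv) c h4 i
  have hsurj : Function.Surjective G.mulVecLin :=
    (LinearMap.injective_iff_surjective).mp hinj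
  obtain ⟨a, ha⟩ := hsurj (Pi.single k 1)
  refine ⟨∑ l, a l • v l, fun i => ?_⟩
  rw [← hmv a i]
  have : G.mulVec a = Pi.single k 1 := ha
  rw [this]
  simp [Pi.single_apply]

/-- Applying the quadratic functional to a decomposition identity. -/
lemma quad_decomp {N : Type*} [Fintype N] {r p : ℕ} (mu : Fin r → ℝ) (lam : Fin p → ℝ)
    (w : Fin r → EuclideanSpace ℂ N) (v : Fin p → EuclideanSpace ℂ N)
    (hdecomp : (∑ j, mu j • vecState (w j)) = ∑ i, lam i • vecState (v i))
    (u : EuclideanSpace ℂ N) :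
    (∑ j, mu j * Complex.normSq (∑ q, (starRingEnd ℂ) (w j q) * u q)) =
    ∑ i, lam i * Complex.normSq (∑ q, (starRingEnd ℂ) (v i q) * u q) := by
  have hq := congrArg (quadLin (u : N → ℂ)) hdecomp
  rw [map_sum, map_sum] at hq
  simp_rw [real_smul_matrix, map_smul, smul_eq_mul, quadLin_vecState] at hq
  exact_mod_cast hq

end UniqueDecompAux

/-- With the lines `ℂeᵢ` pairwise distinct and the `fᵢ` linearly independent, the
separable state `ω = Σ λᵢ ω_{eᵢ⊗fᵢ}` has a unique representation as a convex combination
of pure product states: any decomposition with positive weights and pairwise distinct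
pure product states coincides, up to reordering, with `{(λᵢ, ω_{eᵢ⊗fᵢ}) : λᵢ > 0}`. -/
theorem unique_decomposition {m n p : ℕ}
    (e : Fin p → EuclideanSpace ℂ (Fin m)) (f : Fin p → EuclideanSpace ℂ (Fin n))
    (he : ∀ i, ‖e i‖ = 1) (hf1 : ∀ i, ‖f i‖ = 1) (hf : LinearIndependent ℂ f)
    (hdist : ∀ i j : Fin p, i ≠ j →
      Submodule.span ℂ {e i} ≠ Submodule.span ℂ {e j})
    (lam : Fin p → ℝ) (hlam : ∀ i, 0 ≤ lam i) (hlam1 : (∑ i, lam i) = 1)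
    (r : ℕ) (mu : Fin r → ℝ) (hmu : ∀ j, 0 < mu j) (hmu1 : (∑ j, mu j) = 1)
    (x : Fin r → EuclideanSpace ℂ (Fin m)) (y : Fin r → EuclideanSpace ℂ (Fin n))
    (hx : ∀ j, ‖x j‖ = 1) (hy : ∀ j, ‖y j‖ = 1)
    (hdistinct : ∀ j k : Fin r, j ≠ k →
      vecState (tensorVec (x j) (y j)) ≠ vecState (tensorVec (x k) (y k)))
    (hdecomp : (∑ j, mu j • vecState (tensorVec (x j) (y j))) =
      ∑ i, lam i • vecState (tensorVec (e i) (f i))) :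
    ∃ σ : Fin r → Fin p, Function.Injective σ ∧
      (∀ j, mu j = lam (σ j) ∧
        vecState (tensorVec (x j) (y j)) = vecState (tensorVec (e (σ j)) (f (σ j)))) ∧
      (∀ i, lam i ≠ 0 → ∃ j, σ j = i) := by
  classical
  open UniqueDecompAux in
  set v : Fin p → EuclideanSpace ℂ (Fin m × Fin n) := fun i => tensorVec (e i) (f i) with hv_def
  set w : Fin r → EuclideanSpace ℂ (Fin m × Fin n) := fun j => tensorVec (x j) (y j) with hw_def
  have he0 : ∀ i, e i ≠ 0 := fun i => UniqueDecompAux.norm_one_ne_zero _ (he i)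
  have hf0 : ∀ i, f i ≠ 0 := fun i => UniqueDecompAux.norm_one_ne_zero _ (hf1 i)
  have hx0 : ∀ j, x j ≠ 0 := fun j => UniqueDecompAux.norm_one_ne_zero _ (hx j)
  have hy0 : ∀ j, y j ≠ 0 := fun j => UniqueDecompAux.norm_one_ne_zero _ (hy j)
  have hvli : LinearIndependent ℂ v := UniqueDecompAux.linind_tensor e f he0 hf
  -- step 1 : each `w j` lies in the span of the `v i`
  have hwW : ∀ j, w j ∈ Submodule.span ℂ (Set.range v) := by
    intro j
    rw [← Submodule.orthogonal_orthogonal (Submodule.span ℂ (Set.range v)),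
      Submodule.mem_orthogonal]
    intro u hu
    have hzero : ∀ i, (∑ q, (starRingEnd ℂ) (v i q) * u q) = 0 := by
      intro i
      have hvW : v i ∈ Submodule.span ℂ (Set.range v) := Submodule.subset_span ⟨i, rfl⟩
      have h0 := (Submodule.mem_orthogonal _ u).mp hu (v i) hvW
      rw [PiLp.inner_apply] at h0
      simpa [RCLike.inner_apply, mul_comm] using h0
    have key := UniqueDecompAux.quad_decomp mu lam w v hdecomp u
    have hsum0 : (∑ j, mu j * Complex.normSq (∑ q, (starRingEnd ℂ) (w j q) * u q)) = 0 := by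
      rw [key]
      exact Finset.sum_eq_zero fun i _ => by rw [hzero i]; simp
    have hterm := (Finset.sum_eq_zero_iff_of_nonneg
      (fun j' _ => mul_nonneg (hmu j').le (Complex.normSq_nonneg _))).mp hsum0 j
      (Finset.mem_univ j)
    have hz : (∑ q, (starRingEnd ℂ) (w j q) * u q) = 0 := by
      rcases mul_eq_zero.mp hterm with h | h
      · exact absurd h (hmu j).ne'
      · exact Complex.normSq_eq_zero.mp h
    rw [PiLp.inner_apply]
    simp only [RCLike.inner_apply]
    have : (∑ q, (w j) q * (starRingEnd ℂ) (u q))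
        = (starRingEnd ℂ) (∑ q, (starRingEnd ℂ) (w j q) * u q) := by
      rw [map_sum]
      refine Finset.sum_congr rfl fun q _ => ?_
      rw [map_mul, Complex.conj_conj]
    rw [this, hz, map_zero]
  -- step 2 : each pure product state in the decomposition is one of the `vecState (v i)`
  have hstate : ∀ j, ∃ i, vecState (w j) = vecState (v i) := by
    intro j
    obtain ⟨c, hc⟩ := (Submodule.mem_span_range_iff_exists_fun ℂ).mp (hwW j)
    obtain ⟨i0, c0, hc0, hw0⟩ := UniqueDecompAux.prod_in_span e f he0 hf hdist (x j) (y j)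
      (hx0 j) (hy0 j) c hc
    refine ⟨i0, ?_⟩
    have hco : ∀ q, w j q = c0 * v i0 q := fun q => congrFun (congrArg WithLp.ofLp hw0) q
    have h1 : (starRingEnd ℂ) c0 * c0 = 1 := by
      have hws : (∑ q, (starRingEnd ℂ) (w j q) * w j q) = 1 :=
        UniqueDecompAux.tensor_sum_conj_self (x j) (y j) (hx j) (hy j)
      have hvs : (∑ q, (starRingEnd ℂ) (v i0 q) * v i0 q) = 1 :=
        UniqueDecompAux.tensor_sum_conj_self (e i0) (f i0) (he i0) (hf1 i0)
      have hfac : (∑ q, (starRingEnd ℂ) (w j q) * w j q)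
          = ((starRingEnd ℂ) c0 * c0) * ∑ q, (starRingEnd ℂ) (v i0 q) * v i0 q := by
        rw [Finset.mul_sum]
        refine Finset.sum_congr rfl fun q _ => ?_
        rw [hco q, map_mul]
        ring
      rw [hfac, hvs, mul_one] at hws
      exact hws
    ext a b
    show w j a * (starRingEnd ℂ) (w j b) = v i0 a * (starRingEnd ℂ) (v i0 b)
    rw [hco a, hco b, map_mul]
    linear_combination (v i0 a * (starRingEnd ℂ) (v i0 b)) * h1
  choose σ hσ using hstate
  have hσinj : Function.Injective σ := by
    intro j k hjk
    by_contra hne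
    exact hdistinct j k hne ((hσ j).trans (by rw [hjk]; exact (hσ k).symm))
  have hkey : ∀ k : Fin p, (∑ j, if σ j = k then mu j else 0) = lam k := by
    intro k
    obtain ⟨u, hu⟩ := UniqueDecompAux.exists_dual v hvli k
    have hdecomp' : (∑ j, mu j • vecState (v (σ j))) = ∑ i, lam i • vecState (v i) := by
      rw [← hdecomp]
      exact Finset.sum_congr rfl fun j _ => by rw [hσ j]
    have key := UniqueDecompAux.quad_decomp mu lam (fun j => v (σ j)) v hdecomp' u
    simp_rw [hu] at key
    simp only [apply_ite Complex.normSq, Complex.normSq_one, Complex.normSq_zero,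
      mul_ite, mul_one, mul_zero] at key
    rw [key, Finset.sum_ite_eq' Finset.univ k lam, if_pos (Finset.mem_univ k)]
  refine ⟨σ, hσinj, fun j => ⟨?_, hσ j⟩, fun i hi => ?_⟩
  · have hk := hkey (σ j)
    rw [Finset.sum_eq_single j (fun j' _ hj' => if_neg (fun h => hj' (hσinj h)))
      (fun h => absurd (Finset.mem_univ j) h), if_pos rfl] at hk
    exact hk
  · by_contra h
    push_neg at h
    apply hi
    rw [← hkey i]
    exact Finset.sum_eq_zero fun j _ => if_neg (h j)

end
end

section
/- Let m, n > 1 and k ≤ max(m,n). Then every state in V_k has length exactly k, and every state in V_k has a unique representation as a convex combination of pure product states. -/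
open scoped Kronecker ComplexOrder

noncomputable section

/-- `ω` admits a decomposition as a convex combination of `r` pure product states. -/
def HasDecompOfSize (m n r : ℕ) (ω : Matrix (Fin m × Fin n) (Fin m × Fin n) ℂ) : Prop :=
  ∃ (lam : Fin r → ℝ) (x : Fin r → EuclideanSpace ℂ (Fin m))
    (y : Fin r → EuclideanSpace ℂ (Fin n)),
    (∀ i, 0 ≤ lam i) ∧ (∑ i, lam i) = 1 ∧ (∀ i, ‖x i‖ = 1) ∧ (∀ i, ‖y i‖ = 1) ∧
    ω = ∑ i, lam i • vecState (tensorVec (x i) (y i))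

/-- The separable state `ω` has length (optimal ensemble cardinality) exactly `k`. -/
def HasLength (m n k : ℕ) (ω : Matrix (Fin m × Fin n) (Fin m × Fin n) ℂ) : Prop :=
  HasDecompOfSize m n k ω ∧ ∀ r < k, ¬ HasDecompOfSize m n r ω

/-- `S_k`: the set of separable states of length at most `k`. -/
def lengthLeSet (m n k : ℕ) : Set (Matrix (Fin m × Fin n) (Fin m × Fin n) ℂ) :=
  {ω | ∃ r ≤ k, HasDecompOfSize m n r ω}

/-- `V_k`: the states `ω = Σᵢ λᵢ ω_{eᵢ⊗fᵢ}` with all `λᵢ > 0`, the lines `ℂeᵢ` pairwise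
distinct, and the `fᵢ` linearly independent. -/
def Vset (m n k : ℕ) : Set (Matrix (Fin m × Fin n) (Fin m × Fin n) ℂ) :=
  {ω | ∃ (lam : Fin k → ℝ) (e : Fin k → EuclideanSpace ℂ (Fin m))
        (f : Fin k → EuclideanSpace ℂ (Fin n)),
      (∀ i, 0 < lam i) ∧ (∑ i, lam i) = 1 ∧ (∀ i, ‖e i‖ = 1) ∧ (∀ i, ‖f i‖ = 1) ∧
      (∀ i j : Fin k, i ≠ j → Submodule.span ℂ {e i} ≠ Submodule.span ℂ {e j}) ∧
      LinearIndependent ℂ f ∧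
      ω = ∑ i, lam i • vecState (tensorVec (e i) (f i))}

section Helpers

set_option linter.unusedSectionVars false

variable {ι : Type*} [Fintype ι]

/-- complex "bra-ket" pairing -/
def cdot (u w : ι → ℂ) : ℂ := ∑ i, (starRingEnd ℂ) (u i) * w i

lemma vecState_mulVec (z : EuclideanSpace ℂ ι) (w : ι → ℂ) :
    (vecState z).mulVec w = fun i => cdot z w * z i := by
  funext i
  simp only [Matrix.mulVec, vecState, dotProduct, Matrix.of_apply, cdot, Finset.sum_mul]
  exact Finset.sum_congr rfl fun j _ => by ring

lemma quad_form (z : EuclideanSpace ℂ ι) (w : ι → ℂ) :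
    (∑ i, (starRingEnd ℂ) (w i) * ((vecState z).mulVec w) i)
      = (Complex.normSq (cdot z w) : ℂ) := by
  rw [vecState_mulVec]
  have h1 : ∑ i, (starRingEnd ℂ) (w i) * (cdot z w * z i)
      = cdot z w * ∑ i, (starRingEnd ℂ) (w i) * z i := by
    rw [Finset.mul_sum]; exact Finset.sum_congr rfl fun i _ => by ring
  have h2 : (∑ i, (starRingEnd ℂ) (w i) * z i) = (starRingEnd ℂ) (cdot z w) := by
    rw [cdot, map_sum]
    exact Finset.sum_congr rfl fun i _ => by simp [mul_comm]
  rw [h1, h2, Complex.mul_conj']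
  simp [Complex.normSq_eq_norm_sq]

lemma real_smul_matrix (c : ℝ) (M : Matrix ι ι ℂ) : c • M = (c : ℂ) • M := by
  ext i j; simp [Matrix.smul_apply, Complex.real_smul]

lemma quad_sum {q : ℕ} (c : Fin q → ℝ) (z : Fin q → EuclideanSpace ℂ ι) (w : ι → ℂ) :
    (∑ i, (starRingEnd ℂ) (w i) * ((∑ j, c j • vecState (z j)).mulVec w) i)
      = ((∑ j, c j * Complex.normSq (cdot (z j) w) : ℝ) : ℂ) := by
  have hmv : (∑ j, c j • vecState (z j)).mulVec w = ∑ j, (c j : ℂ) • ((vecState (z j)).mulVec w) := by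
    funext i
    simp_rw [real_smul_matrix]
    rw [Matrix.mulVec, dotProduct]
    have expand : ∀ i1, (∑ j, (c j : ℂ) • vecState (z j)) i i1
        = ∑ j, (c j : ℂ) * (vecState (z j)) i i1 := by
      intro i1
      rw [Matrix.sum_apply]
      simp [Matrix.smul_apply]
    simp_rw [expand, Finset.sum_mul]
    rw [Finset.sum_comm, Finset.sum_apply]
    refine Finset.sum_congr rfl fun j _ => ?_
    simp only [Pi.smul_apply, Matrix.mulVec, dotProduct, smul_eq_mul, Finset.mul_sum]
    exact Finset.sum_congr rfl fun i1 _ => by ring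
  rw [hmv]
  push_cast
  have : ∀ i, (∑ j, (c j :ℂ) • ((vecState (z j)).mulVec w)) i = ∑ j, (c j :ℂ) * ((vecState (z j)).mulVec w) i := by
    intro i; rw [Finset.sum_apply]; simp
  simp_rw [this, Finset.mul_sum]
  rw [Finset.sum_comm]
  refine Finset.sum_congr rfl fun j _ => ?_
  rw [← quad_form (z j) w, Finset.mul_sum]
  exact Finset.sum_congr rfl fun i _ => by ring

lemma tensor_norm {m n : ℕ} (x : EuclideanSpace ℂ (Fin m)) (y : EuclideanSpace ℂ (Fin n)) :
    ‖tensorVec x y‖ = ‖x‖ * ‖y‖ := by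
  rw [EuclideanSpace.norm_eq, EuclideanSpace.norm_eq, EuclideanSpace.norm_eq,
    ← Real.sqrt_mul (by positivity)]
  congr 1
  rw [Finset.sum_mul_sum, Fintype.sum_prod_type]
  refine Finset.sum_congr rfl fun a _ => Finset.sum_congr rfl fun b _ => ?_
  simp [tensorVec, mul_pow, norm_mul]

lemma eucl_ne_zero_iff {ι : Type*} [Fintype ι] (x : EuclideanSpace ℂ ι) (hx : ‖x‖ = 1) :
    ∃ a, x a ≠ 0 := by
  by_contra h
  push_neg at h
  have : x = 0 := by
    ext a; exact h a
  rw [this, norm_zero] at hx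
  norm_num at hx

lemma vecState_eq_of_smul {ι : Type*} [Fintype ι] (v z : EuclideanSpace ℂ ι) (c : ℂ)
    (hz : ‖z‖ = 1) (hv : ‖v‖ = 1) (h : z = c • v) : vecState z = vecState v := by
  have habs : ‖c‖ = 1 := by
    have := congrArg norm h
    rw [hz, norm_smul, hv, mul_one] at this
    exact this.symm
  have hcc : c * (starRingEnd ℂ) c = 1 := by
    rw [Complex.mul_conj]
    norm_cast
    rw [Complex.normSq_eq_norm_sq, habs]; norm_num
  ext i j
  simp only [vecState, Matrix.of_apply, h]
  have : ∀ t, (c • v) t = c * v t := fun _ => rfl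
  rw [this, this, map_mul]
  calc c * v i * ((starRingEnd ℂ) c * (starRingEnd ℂ) (v j))
      = (c * (starRingEnd ℂ) c) * (v i * (starRingEnd ℂ) (v j)) := by ring
    _ = v i * (starRingEnd ℂ) (v j) := by rw [hcc, one_mul]

/-- tensor vectors with independent second factors and nonzero first factors are independent -/
lemma tensor_indep {m n k : ℕ} (e : Fin k → EuclideanSpace ℂ (Fin m))
    (f : Fin k → EuclideanSpace ℂ (Fin n)) (he : ∀ i, e i ≠ 0)
    (hf : LinearIndependent ℂ f) :
    LinearIndependent ℂ (fun i => tensorVec (e i) (f i)) := by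
  rw [Fintype.linearIndependent_iff]
  intro g hg i
  have hval : ∀ (a : Fin m) (b : Fin n), ∑ t, g t * (e t a * f t b) = 0 := by
    intro a b
    have h1 : (∑ t, g t • tensorVec (e t) (f t)) (a, b) = ∑ t, g t * (e t a * f t b) :=
      by rw [WithLp.ofLp_sum, Finset.sum_apply]; rfl
    rw [hg] at h1
    exact h1.symm
  have hcoef : ∀ (a : Fin m), ∀ t, g t * e t a = 0 := by
    intro a
    have := Fintype.linearIndependent_iff.1 hf (fun t => g t * e t a) ?_
    · exact this
    · ext b
      have h2 : (∑ t, (g t * e t a) • f t) b = ∑ t, (g t * e t a) * f t b :=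
        by rw [WithLp.ofLp_sum, Finset.sum_apply]; rfl
      rw [h2]
      simpa [mul_assoc] using hval a b
  obtain ⟨a, ha⟩ : ∃ a, e i a ≠ 0 := by
    by_contra h
    push_neg at h
    exact he i (by ext a; exact h a)
  have := hcoef a i
  exact (mul_eq_zero.1 this).resolve_right ha

/-- the rank-one projections onto linearly independent vectors are linearly independent -/
lemma vecState_indep {q : ℕ} (v : Fin q → EuclideanSpace ℂ ι)
    (hv : LinearIndependent ℂ v) (hn : ∀ i, ‖v i‖ = 1)
    (c : Fin q → ℂ) (hc : ∑ i, c i • vecState (v i) = 0) : ∀ i, c i = 0 := by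
  intro i
  have hmv : ∀ w : ι → ℂ, ∑ t, (c t * cdot (v t) w) • v t = 0 := by
    intro w
    have h0 : (∑ t, c t • vecState (v t)).mulVec w = 0 := by rw [hc]; funext p; simp [Matrix.mulVec, dotProduct]
    have h1 : ∀ p, (∑ t, c t • vecState (v t)).mulVec w p = ∑ t, (c t * cdot (v t) w) * v t p := by
      intro p
      rw [Matrix.mulVec, dotProduct]
      have expand : ∀ p1, (∑ t, c t • vecState (v t)) p p1 = ∑ t, c t * (vecState (v t)) p p1 := by
        intro p1
        rw [Matrix.sum_apply]
        simp [Matrix.smul_apply]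
      simp_rw [expand, Finset.sum_mul]
      rw [Finset.sum_comm]
      refine Finset.sum_congr rfl fun t _ => ?_
      simp only [vecState, Matrix.of_apply, cdot, Finset.mul_sum, Finset.sum_mul]
      exact Finset.sum_congr rfl fun p1 _ => by ring
    ext p
    have h2 : (∑ t, (c t * cdot (v t) w) • v t) p = ∑ t, (c t * cdot (v t) w) * v t p :=
      by rw [WithLp.ofLp_sum, Finset.sum_apply]; rfl
    rw [h2, ← h1 p, h0]; rfl
  have hz : ∀ w : ι → ℂ, c i * cdot (v i) w = 0 := by
    intro w
    exact Fintype.linearIndependent_iff.1 hv _ (hmv w) i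
  have hvv : cdot (v i) (v i) ≠ 0 := by
    have : cdot (v i) (v i) = ((‖v i‖ ^ 2 : ℝ) : ℂ) := by
      rw [cdot]
      rw [EuclideanSpace.norm_eq]
      rw [Real.sq_sqrt (by positivity)]
      push_cast
      refine Finset.sum_congr rfl fun t _ => ?_
      rw [mul_comm, Complex.mul_conj]
      norm_cast
      rw [Complex.normSq_eq_norm_sq]
    rw [this, hn i]
    norm_num
  exact (mul_eq_zero.1 (hz (v i))).resolve_right hvv

lemma product_in_span {m n k : ℕ} (e : Fin k → EuclideanSpace ℂ (Fin m))
    (f : Fin k → EuclideanSpace ℂ (Fin n)) (he : ∀ i, ‖e i‖ = 1) (hfn : ∀ i, ‖f i‖ = 1) (hf : LinearIndependent ℂ f)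
    (hlines : ∀ i j, i ≠ j → Submodule.span ℂ {e i} ≠ Submodule.span ℂ {e j})
    (x : EuclideanSpace ℂ (Fin m)) (y : EuclideanSpace ℂ (Fin n)) (hx : ‖x‖ = 1) (hy : ‖y‖ = 1)
    (hmem : tensorVec x y ∈ Submodule.span ℂ (Set.range fun i => tensorVec (e i) (f i))) :
    ∃ i, vecState (tensorVec x y) = vecState (tensorVec (e i) (f i)) := by
  obtain ⟨c, hc⟩ := (Submodule.mem_span_range_iff_exists_fun ℂ).1 hmem
  obtain ⟨a0, ha0⟩ := eucl_ne_zero_iff x hx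
  obtain ⟨b0, hb0⟩ := eucl_ne_zero_iff y hy
  have hval : ∀ a b, ∑ i, c i * (e i a * f i b) = x a * y b := by
    intro a b
    have h1 : (∑ i, c i • tensorVec (e i) (f i)) (a, b) = ∑ i, c i * (e i a * f i b) :=
      by rw [WithLp.ofLp_sum, Finset.sum_apply]; rfl
    rw [hc] at h1
    exact h1.symm
  have key : ∀ a i, x a0 * (c i * e i a) = x a * (c i * e i a0) := by
    intro a i
    have h := Fintype.linearIndependent_iff.1 hf
      (fun i => x a0 * (c i * e i a) - x a * (c i * e i a0)) ?_ i
    · exact sub_eq_zero.1 h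
    · ext b
      have h2 : (∑ i, (x a0 * (c i * e i a) - x a * (c i * e i a0)) • f i) b
          = ∑ i, (x a0 * (c i * e i a) - x a * (c i * e i a0)) * f i b :=
        by rw [WithLp.ofLp_sum, Finset.sum_apply]; rfl
      rw [h2]
      have h3 : ∑ i, (x a0 * (c i * e i a) - x a * (c i * e i a0)) * f i b
          = x a0 * (∑ i, c i * (e i a * f i b)) - x a * (∑ i, c i * (e i a0 * f i b)) := by
        rw [Finset.mul_sum, Finset.mul_sum, ← Finset.sum_sub_distrib]
        exact Finset.sum_congr rfl fun i _ => by ring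
      rw [h3, hval, hval]
      show _ = (0 : EuclideanSpace ℂ (Fin n)) b
      have : (0 : EuclideanSpace ℂ (Fin n)) b = 0 := rfl
      rw [this]
      ring
  obtain ⟨i0, hi0⟩ : ∃ i, c i ≠ 0 := by
    by_contra h
    push_neg at h
    have h4 : x a0 * y b0 = 0 := by
      rw [← hval a0 b0]
      simp [h]
    exact (mul_ne_zero ha0 hb0) h4
  have hspan : ∀ t, c t ≠ 0 → Submodule.span ℂ {e t} = Submodule.span ℂ {x} := by
    intro t ht
    have het : e t = (e t a0 / x a0) • x := by
      ext a
      show e t a = (e t a0 / x a0) * x a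
      have hk := key a t
      rw [div_mul_eq_mul_div, eq_div_iff ha0]
      apply mul_left_cancel₀ ht
      linear_combination hk
    have hd : e t a0 / x a0 ≠ 0 := by
      intro h0
      have h5 : e t = 0 := by rw [het, h0, zero_smul]
      have h6 := he t
      rw [h5, norm_zero] at h6
      norm_num at h6
    rw [het]
    exact Submodule.span_singleton_smul_eq (IsUnit.mk0 _ hd) x
  have huniq : ∀ i, c i ≠ 0 → i = i0 := by
    intro i hi
    by_contra hne
    exact hlines i i0 hne (by rw [hspan i hi, hspan i0 hi0])
  have hz : tensorVec x y = c i0 • tensorVec (e i0) (f i0) := by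
    rw [← hc]
    rw [Finset.sum_eq_single i0]
    · intro b _ hb
      have hcb : c b = 0 := by
        by_contra h
        exact hb (huniq b h)
      rw [hcb, zero_smul]
    · intro h; exact absurd (Finset.mem_univ i0) h
  exact ⟨i0, vecState_eq_of_smul _ _ _
    (by rw [tensor_norm, hx, hy, mul_one])
    (by rw [tensor_norm, he, hfn, mul_one]) hz⟩

lemma inner_eq_cdot (u w : EuclideanSpace ℂ ι) : (inner ℂ u w : ℂ) = cdot u w := by
  simp [PiLp.inner_apply, RCLike.inner_apply, cdot, mul_comm]

lemma keyDecomp {m n k : ℕ}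
    (lam : Fin k → ℝ) (e : Fin k → EuclideanSpace ℂ (Fin m)) (f : Fin k → EuclideanSpace ℂ (Fin n))
    (hpos : ∀ i, 0 < lam i) (he : ∀ i, ‖e i‖ = 1) (hfn : ∀ i, ‖f i‖ = 1)
    (hlines : ∀ i j, i ≠ j → Submodule.span ℂ {e i} ≠ Submodule.span ℂ {e j})
    (hf : LinearIndependent ℂ f)
    {r : ℕ} (mu : Fin r → ℝ) (x : Fin r → EuclideanSpace ℂ (Fin m))
    (y : Fin r → EuclideanSpace ℂ (Fin n))
    (hmu : ∀ j, 0 < mu j) (hx : ∀ j, ‖x j‖ = 1) (hy : ∀ j, ‖y j‖ = 1)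
    (hdist : ∀ j l, j ≠ l →
      vecState (tensorVec (x j) (y j)) ≠ vecState (tensorVec (x l) (y l)))
    (heq : ∑ i, lam i • vecState (tensorVec (e i) (f i))
        = ∑ j, mu j • vecState (tensorVec (x j) (y j))) :
    ∃ τ : Fin r ≃ Fin k, ∀ j, mu j = lam (τ j) ∧
      vecState (tensorVec (x j) (y j)) = vecState (tensorVec (e (τ j)) (f (τ j))) := by
  classical
  set v : Fin k → EuclideanSpace ℂ (Fin m × Fin n) := fun i => tensorVec (e i) (f i) with hv
  set z : Fin r → EuclideanSpace ℂ (Fin m × Fin n) := fun j => tensorVec (x j) (y j) with hzdef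
  have hvnorm : ∀ i, ‖v i‖ = 1 := fun i => by rw [hv, tensor_norm, he, hfn, mul_one]
  have hvind : LinearIndependent ℂ v :=
    tensor_indep e f (fun i => fun h0 => by simpa [h0] using he i) hf
  set W : Submodule ℂ (EuclideanSpace ℂ (Fin m × Fin n)) := Submodule.span ℂ (Set.range v)
  -- each z j lies in W
  have hzW : ∀ j, z j ∈ W := by
    intro j
    rw [← Submodule.orthogonal_orthogonal W, Submodule.mem_orthogonal]
    intro w hw
    have hQ : (∑ i, lam i * Complex.normSq (cdot (v i) w))
        = (∑ j', mu j' * Complex.normSq (cdot (z j') w)) := by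
      have h1 := quad_sum lam v (w : (Fin m × Fin n) → ℂ)
      have h2 := quad_sum mu z (w : (Fin m × Fin n) → ℂ)
      rw [heq] at h1
      exact_mod_cast h1.symm.trans h2
    have hLHS : ∀ i, cdot (v i) w = 0 := by
      intro i
      rw [← inner_eq_cdot]
      exact (Submodule.mem_orthogonal W w).1 hw (v i) (Submodule.subset_span ⟨i, rfl⟩)
    have hz0 : cdot (z j) w = 0 := by
      have hR : (∑ j', mu j' * Complex.normSq (cdot (z j') w)) = 0 := by
        rw [← hQ]
        refine Finset.sum_eq_zero fun i _ => ?_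
        rw [hLHS i]
        simp
      have := (Finset.sum_eq_zero_iff_of_nonneg (fun j' _ =>
        mul_nonneg (hmu j').le (Complex.normSq_nonneg _))).1 hR j (Finset.mem_univ j)
      have hns : Complex.normSq (cdot (z j) w) = 0 := by
        rcases mul_eq_zero.1 this with h | h
        · exact absurd h (hmu j).ne'
        · exact h
      exact Complex.normSq_eq_zero.1 hns
    have : (inner ℂ (z j) w : ℂ) = 0 := by rw [inner_eq_cdot]; exact hz0
    rw [← inner_conj_symm]
    rw [this]
    simp
  -- each vecState (z j) equals some vecState (v i)
  have hmatch : ∀ j, ∃ i, vecState (z j) = vecState (v i) := fun j =>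
    product_in_span e f he hfn hf hlines (x j) (y j) (hx j) (hy j) (hzW j)
  set τ0 : Fin r → Fin k := fun j => (hmatch j).choose with hτ0
  have hτ0spec : ∀ j, vecState (z j) = vecState (v (τ0 j)) := fun j => (hmatch j).choose_spec
  have hMinj : ∀ i i', vecState (v i) = vecState (v i') → i = i' := by
    intro i i' hii
    by_contra hne
    have hsum : ∑ t, ((if t = i then (1:ℂ) else 0) - if t = i' then 1 else 0) • vecState (v t)
        = 0 := by
      simp only [sub_smul, ite_smul, one_smul, zero_smul, Finset.sum_sub_distrib,
        Finset.sum_ite_eq', Finset.mem_univ, if_true]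
      rw [hii, sub_self]
    have h0 := vecState_indep v hvind hvnorm _ hsum i
    rw [if_pos rfl, if_neg hne] at h0
    norm_num at h0
  set fib : Fin k → ℝ := fun i => ∑ j ∈ Finset.univ.filter (fun j => τ0 j = i), mu j with hfib
  have hweights : ∀ i, lam i = fib i := by
    intro i
    have hsum2 : ∑ i, lam i • vecState (v i) = ∑ i, fib i • vecState (v i) := by
      rw [heq]
      have e1 : ∑ j, mu j • vecState (z j) = ∑ j, mu j • vecState (v (τ0 j)) :=
        Finset.sum_congr rfl fun j _ => by rw [hτ0spec j]
      have e2 : ∑ i, ∑ j ∈ Finset.univ.filter (fun j => τ0 j = i), mu j • vecState (v (τ0 j))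
          = ∑ j, mu j • vecState (v (τ0 j)) := Finset.sum_fiberwise _ _ _
      have e3 : ∀ i, ∑ j ∈ Finset.univ.filter (fun j => τ0 j = i), mu j • vecState (v (τ0 j))
          = fib i • vecState (v i) := by
        intro i
        rw [hfib, Finset.sum_smul]
        refine Finset.sum_congr rfl fun j hj => ?_
        rw [(Finset.mem_filter.1 hj).2]
      rw [e1, ← e2]
      exact Finset.sum_congr rfl fun i _ => e3 i
    have hzero : ∑ i, ((lam i - fib i : ℝ) : ℂ) • vecState (v i) = 0 := by
      have hterm : ∀ i, ((lam i - fib i : ℝ) : ℂ) • vecState (v i)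
          = lam i • vecState (v i) - fib i • vecState (v i) := by
        intro i
        rw [real_smul_matrix, real_smul_matrix]
        push_cast
        rw [sub_smul]
      rw [Finset.sum_congr rfl fun i _ => hterm i, Finset.sum_sub_distrib, hsum2, sub_self]
    have h1 := vecState_indep v hvind hvnorm _ hzero i
    have h2 : lam i - fib i = 0 := by exact_mod_cast h1
    linarith
  have hinj : Function.Injective τ0 := by
    intro j l hjl
    by_contra hne
    exact hdist j l hne ((hτ0spec j).trans (by rw [hjl, ← hτ0spec l]))
  have hsurj : Function.Surjective τ0 := by
    intro i
    by_contra hni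
    push_neg at hni
    have hfi : fib i = 0 := by
      rw [hfib]
      apply Finset.sum_eq_zero
      intro j hj
      exact absurd (Finset.mem_filter.1 hj).2 (hni j)
    have := hweights i
    have := hpos i
    rw [hfi] at *
    linarith
  refine ⟨Equiv.ofBijective τ0 ⟨hinj, hsurj⟩, fun j => ⟨?_, hτ0spec j⟩⟩
  show mu j = lam (τ0 j)
  have hfilter : Finset.univ.filter (fun j' => τ0 j' = τ0 j) = {j} := by
    ext j'
    simp only [Finset.mem_filter, Finset.mem_univ, true_and, Finset.mem_singleton]
    exact ⟨fun h => hinj h, fun h => by rw [h]⟩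
  have hlf : lam (τ0 j) = ∑ j' ∈ Finset.univ.filter (fun j' => τ0 j' = τ0 j), mu j' :=
    hweights (τ0 j)
  rw [hlf, hfilter, Finset.sum_singleton]

lemma sum_smul_vecState_mulVec {q : ℕ} (c : Fin q → ℂ) (z : Fin q → EuclideanSpace ℂ ι)
    (w : ι → ℂ) :
    (∑ j, c j • vecState (z j)).mulVec w
      = ∑ j, (c j * cdot (z j) w) • (fun p => z j p : ι → ℂ) := by
  funext p
  rw [Matrix.mulVec, dotProduct]
  have expand : ∀ p1, (∑ j, c j • vecState (z j)) p p1 = ∑ j, c j * (vecState (z j)) p p1 := by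
    intro p1
    rw [Matrix.sum_apply]
    simp [Matrix.smul_apply]
  simp_rw [expand, Finset.sum_mul]
  rw [Finset.sum_comm, Finset.sum_apply]
  refine Finset.sum_congr rfl fun j _ => ?_
  simp only [Pi.smul_apply, smul_eq_mul, vecState, Matrix.of_apply, cdot, Finset.sum_mul,
    Finset.mul_sum]
  exact Finset.sum_congr rfl fun p1 _ => by ring

lemma rank_decomp_le [DecidableEq ι] {r : ℕ} (mu : Fin r → ℝ) (z : Fin r → EuclideanSpace ℂ ι) :
    (∑ j, mu j • vecState (z j)).rank ≤ r := by
  have hr : LinearMap.range (∑ j, mu j • vecState (z j)).mulVecLin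
      ≤ Submodule.span ℂ (Set.range fun j => (fun p => z j p : ι → ℂ)) := by
    rintro u ⟨w, rfl⟩
    rw [Matrix.mulVecLin_apply]
    have h0 : ∑ j, mu j • vecState (z j) = ∑ j, ((mu j : ℝ) : ℂ) • vecState (z j) :=
      Finset.sum_congr rfl fun j _ => real_smul_matrix _ _
    rw [h0, sum_smul_vecState_mulVec]
    exact Submodule.sum_mem _ fun j _ => Submodule.smul_mem _ _ (Submodule.subset_span ⟨j, rfl⟩)
  have h1 : (∑ j, mu j • vecState (z j)).rank
      ≤ Module.finrank ℂ (Submodule.span ℂ (Set.range fun j => (fun p => z j p : ι → ℂ))) :=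
    Submodule.finrank_mono hr
  exact h1.trans ((finrank_range_le_card _).trans_eq (Fintype.card_fin r))

lemma rank_decomp_eq [DecidableEq ι] {q : ℕ} (lam : Fin q → ℝ) (hpos : ∀ i, 0 < lam i)
    (v : Fin q → EuclideanSpace ℂ ι) (hv : LinearIndependent ℂ v) :
    (∑ i, lam i • vecState (v i)).rank = q := by
  set B : Matrix (Fin q) ι ℂ :=
    Matrix.of fun t p => (Real.sqrt (lam t) : ℂ) * (starRingEnd ℂ) (v t p) with hB
  have hfact : ∑ i, lam i • vecState (v i) = B.conjTranspose * B := by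
    ext p p1
    rw [Matrix.mul_apply]
    have h2 : (∑ i, lam i • vecState (v i)) p p1 = ∑ i, (lam i : ℂ) * vecState (v i) p p1 := by
      rw [Matrix.sum_apply]
      refine Finset.sum_congr rfl fun i _ => ?_
      simp [Matrix.smul_apply, Complex.real_smul]
    rw [h2]
    refine Finset.sum_congr rfl fun t _ => ?_
    have hs : ((Real.sqrt (lam t) : ℂ)) * (Real.sqrt (lam t) : ℂ) = (lam t : ℂ) := by
      rw [← Complex.ofReal_mul, Real.mul_self_sqrt (hpos t).le]
    have hBt : B.conjTranspose p t * B t p1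
        = ((Real.sqrt (lam t) : ℂ) * (Real.sqrt (lam t) : ℂ)) * (v t p * (starRingEnd ℂ) (v t p1)) := by
      simp only [hB, Matrix.conjTranspose_apply, Matrix.of_apply, star_mul', map_mul,
        Complex.star_def, Complex.conj_conj, Complex.conj_ofReal]
      ring
    rw [hBt, hs]
    simp only [vecState, Matrix.of_apply]
  have hBind : LinearIndependent ℂ (fun t => B t) := by
    rw [Fintype.linearIndependent_iff]
    intro g hg t
    have hg2 : ∑ t, ((starRingEnd ℂ) (g t) * (Real.sqrt (lam t) : ℂ)) • v t = 0 := by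
      ext p
      have h3 : (∑ t, ((starRingEnd ℂ) (g t) * (Real.sqrt (lam t) : ℂ)) • v t) p
          = ∑ t, ((starRingEnd ℂ) (g t) * (Real.sqrt (lam t) : ℂ)) * v t p :=
        by rw [WithLp.ofLp_sum, Finset.sum_apply]; rfl
      rw [h3]
      have h4 : (∑ t, g t • B t) p = 0 := by rw [hg]; rfl
      have h5 : (∑ t, g t • B t) p = ∑ t, g t * ((Real.sqrt (lam t) : ℂ) * (starRingEnd ℂ) (v t p)) :=
        Finset.sum_apply _ _ _
      rw [h5] at h4
      have h6 : ∑ t, (starRingEnd ℂ) (g t * ((Real.sqrt (lam t) : ℂ) * (starRingEnd ℂ) (v t p)))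
          = 0 := by
        rw [← map_sum, h4, map_zero]
      rw [show (0 : EuclideanSpace ℂ ι) p = (0 : ℂ) from rfl, ← h6]
      refine Finset.sum_congr rfl fun t _ => ?_
      simp only [map_mul, Complex.conj_conj, Complex.conj_ofReal]
      ring
    have h7 := Fintype.linearIndependent_iff.1 hv _ hg2 t
    have h8 : (starRingEnd ℂ) (g t) = 0 := by
      rcases mul_eq_zero.1 h7 with h | h
      · exact h
      · exfalso
        have : Real.sqrt (lam t) ≠ 0 := Real.sqrt_ne_zero'.2 (hpos t)
        exact this (by exact_mod_cast h)
    simpa using congrArg (starRingEnd ℂ) h8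
  have hBrank : B.rank = q := by
    rw [hBind.rank_matrix, Fintype.card_fin]
  rw [hfact, Matrix.rank_conjTranspose_mul_self, hBrank]


end Helpers

/-- For `m, n > 1` and `k ≤ max(m,n)`, every state in `V_k` has length exactly `k` and
has a unique representation as a convex combination of pure product states. -/
theorem Vset_length_and_unique_decomposition {m n k : ℕ}
    (hm : 1 < m) (hn : 1 < n) (hk : k ≤ max m n)
    (ω : Matrix (Fin m × Fin n) (Fin m × Fin n) ℂ) (hω : ω ∈ Vset m n k) :
    HasLength m n k ω ∧
    (∀ (r s : ℕ) (mu : Fin r → ℝ) (nu : Fin s → ℝ)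
      (x : Fin r → EuclideanSpace ℂ (Fin m)) (y : Fin r → EuclideanSpace ℂ (Fin n))
      (u : Fin s → EuclideanSpace ℂ (Fin m)) (v : Fin s → EuclideanSpace ℂ (Fin n)),
      (∀ j, 0 < mu j) → (∑ j, mu j) = 1 → (∀ j, ‖x j‖ = 1) → (∀ j, ‖y j‖ = 1) →
      (∀ j l : Fin r, j ≠ l →
        vecState (tensorVec (x j) (y j)) ≠ vecState (tensorVec (x l) (y l))) →
      (∀ j, 0 < nu j) → (∑ j, nu j) = 1 → (∀ j, ‖u j‖ = 1) → (∀ j, ‖v j‖ = 1) →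
      (∀ j l : Fin s, j ≠ l →
        vecState (tensorVec (u j) (v j)) ≠ vecState (tensorVec (u l) (v l))) →
      ω = ∑ j, mu j • vecState (tensorVec (x j) (y j)) →
      ω = ∑ j, nu j • vecState (tensorVec (u j) (v j)) →
      ∃ σ : Fin r ≃ Fin s, ∀ j, mu j = nu (σ j) ∧
        vecState (tensorVec (x j) (y j)) =
          vecState (tensorVec (u (σ j)) (v (σ j)))) := by
  obtain ⟨lam, e, f, hpos, hsum, he, hfn, hlines, hf, hωeq⟩ := hω
  have hvind : LinearIndependent ℂ (fun i => tensorVec (e i) (f i)) :=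
    tensor_indep e f (fun i h0 => by simpa [h0] using he i) hf
  constructor
  · constructor
    · exact ⟨lam, e, f, fun i => (hpos i).le, hsum, he, hfn, hωeq⟩
    · intro r hr hdec
      obtain ⟨mu, x, y, hmu0, hmusum, hx, hy, hωeq2⟩ := hdec
      have hrank1 : ω.rank = k := by
        rw [hωeq]
        exact rank_decomp_eq lam hpos _ hvind
      have hrank2 : ω.rank ≤ r := by
        rw [hωeq2]
        exact rank_decomp_le mu _
      rw [hrank1] at hrank2
      omega
  · intro r s mu nu x y u v hmu hmusum hx hy hxyd hnu hnusum hu hv huvd hd1 hd2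
    obtain ⟨τ1, hτ1⟩ := keyDecomp lam e f hpos he hfn hlines hf mu x y hmu hx hy hxyd
      (hωeq.symm.trans hd1)
    obtain ⟨τ2, hτ2⟩ := keyDecomp lam e f hpos he hfn hlines hf nu u v hnu hu hv huvd
      (hωeq.symm.trans hd2)
    refine ⟨τ1.trans τ2.symm, fun j => ⟨?_, ?_⟩⟩
    · have h2 := (hτ2 (τ2.symm (τ1 j))).1
      rw [Equiv.apply_symm_apply] at h2
      rw [(hτ1 j).1, Equiv.trans_apply, ← h2]
    · have h2 := (hτ2 (τ2.symm (τ1 j))).2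
      rw [Equiv.apply_symm_apply] at h2
      rw [(hτ1 j).2, Equiv.trans_apply, ← h2]

end
end
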